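/- arXiv:1803.10347 — 4 statements merged into one kernel-verified Lean document; each statement's English description precedes it below -/
import Mathlib

section
/- Let n, m be positive integers, let s be a positive real number, and let f : B^n → B^m be a holomorphic map with f(0) = 0 such that 1 − ⟨f(z), f(w)⟩ = (1 − ⟨z,w⟩)^s for all z, w ∈ B^n, where the complex power is the principal branch (well defined since Re(1−⟨z,w⟩) > 0 when |⟨z,w⟩| < 1). Then s = 1; consequently ⟨f(z), f(w)⟩ = ⟨z,w⟩ for all z, w ∈ B^n. -/
/-!
STATEMENT 2: If `f : 𝔹ⁿ → 𝔹ᵐ` is holomorphic with `f(0) = 0` and satisfies the polarized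
functional equation `1 − ⟨f(z),f(w)⟩ = (1 − ⟨z,w⟩)^s` (principal branch) for a positive real
`s`, then `s = 1` and consequently `⟨f(z),f(w)⟩ = ⟨z,w⟩` on the ball.
-/

/-- The standard Hermitian inner product `⟨z,w⟩ = ∑ zᵢ · conj(wᵢ)` on `ℂⁿ`. -/
noncomputable def herm {n : ℕ} (z w : EuclideanSpace ℂ (Fin n)) : ℂ :=
  ∑ i, z i * (starRingEnd ℂ) (w i)

open Metric Finset Complex

namespace PolarizedAux

lemma iterWithin_of_isOpen {s : Set ℂ} (hs : IsOpen s) {x : ℂ} (hx : x ∈ s) (f : ℂ → ℂ) (k : ℕ) :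
    iteratedDerivWithin k f s x = iteratedDeriv k f x := by
  rw [iteratedDerivWithin_eq_iteratedFDerivWithin, iteratedDeriv_eq_iteratedFDeriv,
    iteratedFDerivWithin_of_isOpen k hs hx]

lemma repos (c ζ : ℂ) (h : ‖c * ζ‖ < 1) : 0 < (1 - c * ζ).re := by
  have h1 : |(c * ζ).re| ≤ ‖c * ζ‖ := Complex.abs_re_le_norm _
  have h2 : ‖c * ζ‖ < 1 := h
  have := abs_le.mp h1
  simp only [Complex.sub_re, Complex.one_re]
  linarith

lemma hdcpow (c ζ : ℂ) (h : ‖c * ζ‖ < 1) (t : ℂ) :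
    HasDerivAt (fun z : ℂ => (1 - c * z) ^ t) (t * (1 - c * ζ) ^ (t - 1) * (-c)) ζ := by
  have hb : HasDerivAt (fun z : ℂ => 1 - c * z) (-c) ζ := by
    simpa using ((hasDerivAt_id ζ).const_mul c).const_sub 1
  exact hb.cpow_const (Or.inl (repos c ζ h))

lemma memD (c ζ : ℂ) (hc : ‖c‖ ≤ 1) (hζ : ζ ∈ Metric.ball (0:ℂ) 1) : ‖c * ζ‖ < 1 := by
  rw [mem_ball_zero_iff] at hζ
  calc ‖c * ζ‖ = ‖c‖ * ‖ζ‖ := norm_mul c ζ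
  _ ≤ 1 * ‖ζ‖ := by gcongr
  _ < 1 := by simpa using hζ

lemma cdcpow (c : ℂ) (hc : ‖c‖ ≤ 1) (t : ℂ) (N : ℕ∞) :
    ContDiffOn ℂ N (fun z : ℂ => (1 - c * z) ^ t) (Metric.ball (0:ℂ) 1) := by
  refine DifferentiableOn.contDiffOn (fun ζ hζ => ?_) isOpen_ball
  exact (hdcpow c ζ (memD c ζ hc hζ) t).differentiableAt.differentiableWithinAt

/-- Iterated derivative of `(1 - c z) ^ t` within the unit disc. -/
lemma iter_cpow (c : ℂ) (hc : ‖c‖ ≤ 1) (k : ℕ) : ∀ (t : ℂ), ∀ ζ ∈ Metric.ball (0:ℂ) 1,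
    iteratedDerivWithin k (fun z : ℂ => (1 - c * z) ^ t) (Metric.ball (0:ℂ) 1) ζ
      = (∏ j ∈ Finset.range k, (t - j)) * (-c) ^ k * (1 - c * ζ) ^ (t - k) := by
  induction k with
  | zero => intro t ζ hζ; simp
  | succ k IH =>
    intro t ζ hζ
    have hu : UniqueDiffOn ℂ (Metric.ball (0:ℂ) 1) := isOpen_ball.uniqueDiffOn
    rw [iteratedDerivWithin_succ']
    have heqon : Set.EqOn (derivWithin (fun z : ℂ => (1 - c * z) ^ t) (Metric.ball (0:ℂ) 1))
        (fun z : ℂ => (t * -c) * (1 - c * z) ^ (t - 1)) (Metric.ball (0:ℂ) 1) := by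
      intro y hy
      have := (hdcpow c y (memD c y hc hy) t).hasDerivWithinAt.derivWithin
        (hu.uniqueDiffWithinAt hy)
      rw [this]; ring
    rw [iteratedDerivWithin_congr heqon hζ,
      iteratedDerivWithin_const_mul hζ hu (t * -c) ((cdcpow c hc (t-1) k).of_le le_rfl ζ hζ),
      IH (t-1) ζ hζ]
    rw [Finset.prod_range_succ', pow_succ]
    push_cast
    have h1 : ∀ j:ℕ, t - 1 - (j:ℂ) = t - ((j:ℂ)+1) := by intro j; ring
    simp_rw [h1]
    ring

lemma iterDeriv_cmul (C : ℂ) (h : ℂ → ℂ) (l : ℕ) (hh : ContDiff ℂ l h) (x : ℂ) :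
    iteratedDeriv l (fun z => C * h z) x = C * iteratedDeriv l h x := by
  rw [← iteratedDerivWithin_univ, ← iteratedDerivWithin_univ,
    iteratedDerivWithin_const_mul (Set.mem_univ x) uniqueDiffOn_univ C hh.contDiffAt.contDiffWithinAt]

lemma iter_monomial (l : ℕ) : ∀ k : ℕ,
    iteratedDeriv l (fun z : ℂ => z ^ k) 0 = if l = k then (k.factorial : ℂ) else 0 := by
  induction l with
  | zero =>
    intro k
    cases k with
    | zero => simp
    | succ k => simp [Nat.succ_ne_zero, zero_pow]
  | succ l IH =>
    intro k
    rw [iteratedDeriv_succ']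
    cases k with
    | zero =>
      have h0 : deriv (fun z : ℂ => z ^ 0) = fun _ => (0:ℂ) := by
        funext z; simp
      rw [h0]
      have h1 : iteratedDeriv l (fun _ : ℂ => (0:ℂ)) 0 = 0 := by
        simpa using iterDeriv_cmul 0 (fun z => z) l (contDiff_id) 0
      simp [h1]
    | succ k =>
      have h0 : deriv (fun z : ℂ => z ^ (k+1)) = fun z => ((k:ℂ)+1) * z ^ k := by
        funext z; simp [deriv_pow]
      have hck : ContDiff ℂ (l:ℕ∞) (fun z : ℂ => z ^ k) := by
        have := contDiff_id (𝕜 := ℂ) (E := ℂ) (n := (l:ℕ∞))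
        exact this.pow k
      rw [h0, iterDeriv_cmul _ _ _ hck, IH k]
      rcases eq_or_ne l k with rfl | hlk
      · simp [Nat.factorial_succ]
      · simp [hlk, fun h => hlk (Nat.succ_injective h)]

lemma iterWithin_sum {ι : Type*} (t : Finset ι) (F : ι → ℂ → ℂ) (k : ℕ)
    {s : Set ℂ} (hu : UniqueDiffOn ℂ s) {x : ℂ} (hx : x ∈ s)
    (hF : ∀ i ∈ t, ContDiffOn ℂ k (F i) s) :
    iteratedDerivWithin k (fun z => ∑ i ∈ t, F i z) s x
      = ∑ i ∈ t, iteratedDerivWithin k (F i) s x := by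
  classical
  induction t using Finset.induction with
  | empty =>
    simp only [Finset.sum_empty]
    have h0 : iteratedDerivWithin k (fun _ : ℂ => (0:ℂ)) s x = 0 := by
      simpa using iteratedDerivWithin_const_mul hx hu 0 (contDiffWithinAt_const (c := (1:ℂ)))
    simpa using h0
  | insert a t' ha IH =>
    simp only [Finset.sum_insert ha]
    rw [show (fun z => F a z + ∑ i ∈ t', F i z) = F a + fun z => ∑ i ∈ t', F i z from rfl,
      iteratedDerivWithin_add hx hu (hF a (Finset.mem_insert_self a t') x hx)
      ((ContDiffOn.sum fun i hi => hF i (Finset.mem_insert_of_mem hi)) x hx),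
      IH (fun i hi => hF i (Finset.mem_insert_of_mem hi))]

lemma herm_bound {m : ℕ} (u v : EuclideanSpace ℂ (Fin m)) :
    ‖∑ i, u i * (starRingEnd ℂ) (v i)‖ ≤ ‖u‖ * ‖v‖ := by
  have h : (∑ i, u i * (starRingEnd ℂ) (v i)) = inner (𝕜 := ℂ) v u := by
    rw [PiLp.inner_apply]
    simp [RCLike.inner_apply, mul_comm]
  rw [h]
  calc ‖(inner (𝕜 := ℂ) v u : ℂ)‖ ≤ ‖v‖ * ‖u‖ := norm_inner_le_norm v u
  _ = ‖u‖ * ‖v‖ := mul_comm _ _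

end PolarizedAux

open PolarizedAux

theorem exponent_eq_one_of_polarized_functional_equation
    (n m : ℕ) (hn : 0 < n) (hm : 0 < m) (s : ℝ) (hs : 0 < s)
    (f : EuclideanSpace ℂ (Fin n) → EuclideanSpace ℂ (Fin m))
    (hf_maps : ∀ z ∈ Metric.ball (0 : EuclideanSpace ℂ (Fin n)) 1,
      f z ∈ Metric.ball (0 : EuclideanSpace ℂ (Fin m)) 1)
    (hf_holo : DifferentiableOn ℂ f (Metric.ball 0 1))
    (hf0 : f 0 = 0)
    (heq : ∀ z ∈ Metric.ball (0 : EuclideanSpace ℂ (Fin n)) 1,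
           ∀ w ∈ Metric.ball (0 : EuclideanSpace ℂ (Fin n)) 1,
      1 - herm (f z) (f w) = (1 - herm z w) ^ (s : ℂ)) :
    s = 1 ∧
      ∀ z ∈ Metric.ball (0 : EuclideanSpace ℂ (Fin n)) 1,
      ∀ w ∈ Metric.ball (0 : EuclideanSpace ℂ (Fin n)) 1,
        herm (f z) (f w) = herm z w := by
  classical
  set D : Set ℂ := Metric.ball (0:ℂ) 1 with hD
  have hu : UniqueDiffOn ℂ D := isOpen_ball.uniqueDiffOn
  have h0D : (0:ℂ) ∈ D := by simp [hD]
  set i0 : Fin n := ⟨0, hn⟩ with hi0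
  set e1 : EuclideanSpace ℂ (Fin n) := EuclideanSpace.single i0 (1:ℂ) with he1
  have he1norm : ‖e1‖ = 1 := by simp [he1]
  -- membership
  have hmem : ∀ ζ ∈ D, ζ • e1 ∈ Metric.ball (0 : EuclideanSpace ℂ (Fin n)) 1 := by
    intro ζ hζ
    rw [mem_ball_zero_iff, norm_smul, he1norm, mul_one]
    exact mem_ball_zero_iff.mp hζ
  -- the sliced map
  set g : ℂ → Fin m → ℂ := fun ζ i => f (ζ • e1) i with hg
  -- hermitian product of slices
  have hermslice : ∀ ζ ω : ℂ, herm (ζ • e1) (ω • e1) = ζ * (starRingEnd ℂ) ω := by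
    intro ζ ω
    simp only [herm, he1, PiLp.smul_apply, smul_eq_mul, EuclideanSpace.single_apply, map_mul]
    rw [Finset.sum_eq_single i0] <;> simp +contextual
  -- the key one-variable functional equation
  have key : ∀ ζ ∈ D, ∀ ω ∈ D,
      (∑ i, g ζ i * (starRingEnd ℂ) (g ω i)) = 1 - (1 - ζ * (starRingEnd ℂ) ω) ^ (s:ℂ) := by
    intro ζ hζ ω hω
    have := heq _ (hmem ζ hζ) _ (hmem ω hω)
    rw [hermslice] at this
    have h2 : herm (f (ζ • e1)) (f (ω • e1)) = ∑ i, g ζ i * (starRingEnd ℂ) (g ω i) := rfl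
    rw [h2] at this
    linear_combination -this
  -- analyticity of the slices
  have hgd : ∀ i : Fin m, DifferentiableOn ℂ (fun ζ => g ζ i) D := by
    intro i
    have h1 : DifferentiableOn ℂ (fun ζ : ℂ => f (ζ • e1)) D := by
      refine hf_holo.comp ?_ hmem
      exact (differentiable_id.smul_const e1).differentiableOn
    exact ((EuclideanSpace.proj i).differentiable.comp_differentiableOn h1)
  have hgc : ∀ (i : Fin m) (N : ℕ∞), ContDiffOn ℂ N (fun ζ => g ζ i) D :=
    fun i N => (hgd i).contDiffOn isOpen_ball
  -- Taylor coefficients (times factorials)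
  set A : ℕ → Fin m → ℂ := fun k i => iteratedDerivWithin k (fun ζ => g ζ i) D 0 with hA
  set P : ℕ → ℂ := fun k => ∏ j ∈ Finset.range k, ((s:ℂ) - j) with hP
  have hPconj : ∀ k, (starRingEnd ℂ) (P k) = P k := by
    intro k
    rw [hP, map_prod]
    refine Finset.prod_congr rfl fun j _ => ?_
    simp [Complex.conj_ofReal]
  -- STEP 1
  have step1 : ∀ k : ℕ, 0 < k → ∀ ω ∈ D,
      ∑ i, (starRingEnd ℂ) (g ω i) * A k i
        = (-1)^(k+1) * P k * ((starRingEnd ℂ) ω)^k := by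
    intro k hk ω hω
    set c : ℂ := (starRingEnd ℂ) ω with hc
    have hcle : ‖c‖ ≤ 1 := by
      rw [hc, RCLike.norm_conj]
      exact (mem_ball_zero_iff.mp hω).le
    have heqon : Set.EqOn (fun ζ => ∑ i, (starRingEnd ℂ) (g ω i) * g ζ i)
        (fun ζ : ℂ => 1 - (1 - c * ζ) ^ (s:ℂ)) D := by
      intro ζ hζ
      show (∑ i, (starRingEnd ℂ) (g ω i) * g ζ i) = 1 - (1 - c * ζ) ^ (s:ℂ)
      calc (∑ i, (starRingEnd ℂ) (g ω i) * g ζ i)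
          = ∑ i, g ζ i * (starRingEnd ℂ) (g ω i) :=
            Finset.sum_congr rfl fun i _ => mul_comm _ _
      _ = 1 - (1 - ζ * (starRingEnd ℂ) ω) ^ (s:ℂ) := key ζ hζ ω hω
      _ = 1 - (1 - c * ζ) ^ (s:ℂ) := by rw [hc, mul_comm]
    have h1 := iteratedDerivWithin_congr (n := k) heqon h0D
    rw [iterWithin_sum Finset.univ _ k hu h0D
      (fun i _ => (contDiffOn_const.mul (hgc i k)))] at h1
    have h2 : ∀ i : Fin m, iteratedDerivWithin k (fun ζ => (starRingEnd ℂ) (g ω i) * g ζ i) D 0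
        = (starRingEnd ℂ) (g ω i) * A k i := fun i =>
      iteratedDerivWithin_const_mul h0D hu _ (hgc i k 0 h0D)
    simp only [h2] at h1
    rw [h1]
    -- now compute RHS
    rw [iteratedDerivWithin_const_sub hk, iteratedDerivWithin_fun_neg,
      iter_cpow c hcle k (s:ℂ) 0 h0D]
    simp only [mul_zero, sub_zero, Complex.one_cpow]
    rw [show ((-c):ℂ)^k = (-1)^k * c^k from by rw [neg_pow]]
    rw [pow_succ]
    ring
  -- STEP 2 (conjugated)
  have step2 : ∀ k : ℕ, 0 < k → ∀ ω ∈ D,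
      (∑ i, (starRingEnd ℂ) (A k i) * g ω i) = (-1)^(k+1) * P k * ω^k := by
    intro k hk ω hω
    have h1 := step1 k hk ω hω
    have h2 : (starRingEnd ℂ) (∑ i, (starRingEnd ℂ) (g ω i) * A k i)
        = ∑ i, (starRingEnd ℂ) (A k i) * g ω i := by
      rw [map_sum]
      refine Finset.sum_congr rfl fun i _ => ?_
      rw [map_mul, Complex.conj_conj, mul_comm]
    have h3 : (starRingEnd ℂ) ((-1)^(k+1) * P k * ((starRingEnd ℂ) ω)^k)
        = (-1)^(k+1) * P k * ω^k := by
      rw [map_mul, map_mul, map_pow, map_pow, map_neg, map_one, hPconj, Complex.conj_conj]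
    rw [← h2, h1, h3]
  -- STEP 3: orthogonality relations
  have step3 : ∀ k l : ℕ, 0 < k →
      (∑ i, (starRingEnd ℂ) (A k i) * A l i)
        = (-1)^(k+1) * P k * (if l = k then (k.factorial : ℂ) else 0) := by
    intro k l hk
    have heqon : Set.EqOn (fun ω => ∑ i, (starRingEnd ℂ) (A k i) * g ω i)
        (fun ω : ℂ => ((-1)^(k+1) * P k) * ω^k) D := by
      intro ω hω
      simpa using step2 k hk ω hω
    have h1 := iteratedDerivWithin_congr (n := l) heqon h0D
    rw [iterWithin_sum Finset.univ _ l hu h0D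
      (fun i _ => (contDiffOn_const.mul (hgc i l)))] at h1
    have h2 : ∀ i : Fin m, iteratedDerivWithin l (fun ω => (starRingEnd ℂ) (A k i) * g ω i) D 0
        = (starRingEnd ℂ) (A k i) * A l i := fun i =>
      iteratedDerivWithin_const_mul h0D hu _ (hgc i l 0 h0D)
    simp only [h2] at h1
    rw [h1]
    have hpk : ContDiffOn ℂ (l:ℕ∞) (fun ω : ℂ => ω ^ k) D := by
      have := contDiff_id (𝕜 := ℂ) (E := ℂ) (n := (l:ℕ∞))
      exact (this.pow k).contDiffOn
    rw [iteratedDerivWithin_const_mul h0D hu _ (hpk 0 h0D),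
      iterWithin_of_isOpen isOpen_ball h0D _ l, iter_monomial l k]
  -- STEP 4: s is a natural number
  have step4 : ∃ j : ℕ, s = (j:ℝ) := by
    by_contra hcon
    push_neg at hcon
    have hPne : ∀ k : ℕ, P k ≠ 0 := by
      intro k
      rw [hP]
      refine Finset.prod_ne_zero_iff.mpr fun j hj => ?_
      intro hzero
      apply hcon j
      have hsj : (s:ℂ) = ((j:ℝ):ℂ) := by push_cast; linear_combination hzero
      exact_mod_cast hsj
    set v : Fin (m+1) → EuclideanSpace ℂ (Fin m) := fun k => WithLp.toLp 2 (fun i => A ((k:ℕ)+1) i) with hv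
    have hinner : ∀ k l : Fin (m+1), inner (𝕜 := ℂ) (v k) (v l) =
        (-1)^((k:ℕ)+1+1) * P ((k:ℕ)+1)
          * (if (l:ℕ)+1 = (k:ℕ)+1 then ((((k:ℕ)+1).factorial : ℕ) : ℂ) else 0) := by
      intro k l
      rw [PiLp.inner_apply]
      simp only [RCLike.inner_apply]
      rw [← step3 ((k:ℕ)+1) ((l:ℕ)+1) (Nat.succ_pos _)]
      exact Finset.sum_congr rfl fun i _ => mul_comm _ _
    have hne : ∀ k : Fin (m+1), v k ≠ 0 := by
      intro k hk0
      have h0 : inner (𝕜 := ℂ) (v k) (v k) = (0:ℂ) := by rw [hk0]; exact inner_zero_right _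
      rw [hinner k k, if_pos rfl] at h0
      rcases mul_eq_zero.mp h0 with h | h
      · rcases mul_eq_zero.mp h with h' | h'
        · exact pow_ne_zero _ (neg_ne_zero.mpr one_ne_zero) h'
        · exact hPne _ h'
      · exact Nat.cast_ne_zero.mpr (Nat.factorial_ne_zero _) h
    have horth : ∀ k l : Fin (m+1), k ≠ l → inner (𝕜 := ℂ) (v k) (v l) = (0:ℂ) := by
      intro k l hkl
      rw [hinner k l, if_neg, mul_zero]
      intro hll
      exact hkl (Fin.ext (by omega)).symm
    have li := linearIndependent_of_ne_zero_of_inner_eq_zero hne horth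
    have hcard := li.fintype_card_le_finrank
    rw [finrank_euclideanSpace_fin, Fintype.card_fin] at hcard
    omega
  obtain ⟨j, hj⟩ := step4
  have hj0 : j ≠ 0 := by
    rintro rfl
    rw [Nat.cast_zero] at hj
    linarith
  -- STEP 5: j = 1 via a boundedness estimate
  have hjlt : j < 2 := by
    by_contra hge
    push_neg at hge
    have hζD : (4/5 : ℂ) ∈ D := by
      rw [hD, mem_ball_zero_iff, show (4/5:ℂ) = ((4/5:ℝ):ℂ) by norm_num,
        Complex.norm_real, Real.norm_eq_abs, abs_lt]
      constructor <;> norm_num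
    have hωD : (-(4/5) : ℂ) ∈ D := by
      rw [hD, mem_ball_zero_iff, show (-(4/5):ℂ) = ((-(4/5):ℝ):ℂ) by norm_num,
        Complex.norm_real, Real.norm_eq_abs, abs_lt]
      constructor <;> norm_num
    have hkey := key (4/5) hζD (-(4/5)) hωD
    have hconj : (1:ℂ) - (4/5) * (starRingEnd ℂ) (-(4/5) : ℂ) = ((41/25 : ℝ) : ℂ) := by
      rw [show (-(4/5):ℂ) = ((-(4/5):ℝ):ℂ) by norm_num, Complex.conj_ofReal]
      norm_num
    rw [hconj] at hkey
    have hX : ((41/25 : ℝ) : ℂ) ^ (s : ℂ) = (((41/25 : ℝ) ^ j : ℝ) : ℂ) := by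
      rw [hj, Complex.ofReal_natCast, Complex.cpow_natCast, Complex.ofReal_pow]
    rw [hX] at hkey
    have hb : ‖∑ i, g (4/5) i * (starRingEnd ℂ) (g (-(4/5)) i)‖
        ≤ ‖f ((4/5:ℂ) • e1)‖ * ‖f ((-(4/5):ℂ) • e1)‖ :=
      herm_bound (f ((4/5:ℂ) • e1)) (f ((-(4/5):ℂ) • e1))
    have hu1 : ‖f ((4/5:ℂ) • e1)‖ < 1 := mem_ball_zero_iff.mp (hf_maps _ (hmem _ hζD))
    have hu2 : ‖f ((-(4/5):ℂ) • e1)‖ < 1 := mem_ball_zero_iff.mp (hf_maps _ (hmem _ hωD))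
    have hlt1 : ‖∑ i, g (4/5) i * (starRingEnd ℂ) (g (-(4/5)) i)‖ < 1 := by
      have h1 : ‖f ((4/5:ℂ) • e1)‖ * ‖f ((-(4/5):ℂ) • e1)‖ < 1 := by
        nlinarith [norm_nonneg (f ((4/5:ℂ) • e1)), norm_nonneg (f ((-(4/5):ℂ) • e1))]
      linarith
    rw [hkey] at hlt1
    have habs : ‖1 - (((41/25 : ℝ) ^ j : ℝ) : ℂ)‖ = |1 - (41/25 : ℝ)^j| := by
      rw [show (1:ℂ) - (((41/25 : ℝ) ^ j : ℝ) : ℂ) = ((1 - (41/25:ℝ)^j : ℝ) : ℂ) by push_cast; ring,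
        Complex.norm_real, Real.norm_eq_abs]
    rw [habs] at hlt1
    have hmono : (41/25 : ℝ)^2 ≤ (41/25 : ℝ)^j := pow_le_pow_right₀ (by norm_num) hge
    rw [abs_lt] at hlt1
    nlinarith [hlt1.1]
  have hj1 : j = 1 := by omega
  have hs1 : s = 1 := by rw [hj, hj1, Nat.cast_one]
  refine ⟨hs1, fun z hz w hw => ?_⟩
  have h := heq z hz w hw
  rw [hs1, Complex.ofReal_one, Complex.cpow_one] at h
  linear_combination -h
end

section
/- Let n, m be positive integers and let f : B^n → B^m be a holomorphic map with f(0) = 0 such that ⟨f(z), f(w)⟩ = ⟨z, w⟩ for all z, w ∈ B^n. Then f is the restriction to B^n of a ℂ-linear isometry L : ℂ^n → ℂ^m, i.e., there is a linear map L with ‖L(v)‖ = ‖v‖ for all v ∈ ℂ^n and f(z) = L(z) for all z ∈ B^n. -/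
open scoped InnerProductSpace

lemma herm_eq_inner {n : ℕ} (z w : EuclideanSpace ℂ (Fin n)) :
    herm z w = ⟪w, z⟫_ℂ := by
  rw [herm, PiLp.inner_apply]
  exact Finset.sum_congr rfl fun i _ => by simp [mul_comm]

/-- half the i-th standard basis vector -/
noncomputable def halfe {n : ℕ} (i : Fin n) : EuclideanSpace ℂ (Fin n) :=
  (1/2 : ℂ) • EuclideanSpace.single i (1 : ℂ)

lemma halfe_mem_ball {n : ℕ} (i : Fin n) :
    halfe i ∈ Metric.ball (0 : EuclideanSpace ℂ (Fin n)) 1 := by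
  rw [Metric.mem_ball, dist_zero_right, halfe, norm_smul, EuclideanSpace.norm_single]
  norm_num

lemma sum_halfe {n : ℕ} (z : EuclideanSpace ℂ (Fin n)) :
    (∑ i, (2 * z i) • halfe i) = z := by
  ext j
  have : (∑ i, (2 * z i) • halfe i) j = ∑ i, ((2 * z i) • halfe i) j :=
    by rw [WithLp.ofLp_sum, Finset.sum_apply]
  rw [this]
  have h : ∀ i, ((2 * z i) • halfe i) j
      = (2 * z i) * ((1/2 : ℂ) * (if j = i then 1 else 0)) := by
    intro i
    simp [halfe, EuclideanSpace.single_apply, smul_smul]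
  simp only [h]
  rw [Finset.sum_congr rfl (fun i _ => by split_ifs <;> ring :
    ∀ i ∈ Finset.univ, (2 * z i) * ((1/2 : ℂ) * (if j = i then 1 else 0))
      = if j = i then z i else 0)]
  simp

lemma decomp {n m : ℕ}
    (f : EuclideanSpace ℂ (Fin n) → EuclideanSpace ℂ (Fin m))
    (hinner : ∀ u ∈ Metric.ball (0 : EuclideanSpace ℂ (Fin n)) 1,
      ∀ v ∈ Metric.ball (0 : EuclideanSpace ℂ (Fin n)) 1,
      ⟪f u, f v⟫_ℂ = ⟪u, v⟫_ℂ)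
    (z : EuclideanSpace ℂ (Fin n)) (hz : z ∈ Metric.ball 0 1) :
    f z = ∑ i, (2 * z i) • f (halfe i) := by
  set S : EuclideanSpace ℂ (Fin m) := ∑ i, (2 * z i) • f (halfe i) with hS
  have key : ∀ w ∈ Metric.ball (0 : EuclideanSpace ℂ (Fin n)) 1,
      ⟪f z - S, f w⟫_ℂ = 0 := by
    intro w hw
    rw [inner_sub_left, hinner z hz w hw]
    have hSw : ⟪S, f w⟫_ℂ = ⟪z, w⟫_ℂ := by
      rw [hS, sum_inner]
      have : ∀ i ∈ Finset.univ, ⟪(2 * z i) • f (halfe i), f w⟫_ℂ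
          = ⟪(2 * z i) • halfe i, w⟫_ℂ := by
        intro i _
        rw [inner_smul_left, inner_smul_left, hinner _ (halfe_mem_ball i) w hw]
      rw [Finset.sum_congr rfl this, ← sum_inner, sum_halfe]
    rw [hSw, sub_self]
  have key2 : ⟪f z - S, f z - S⟫_ℂ = 0 := by
    rw [inner_sub_right, key z hz, zero_sub, neg_eq_zero, hS, inner_sum]
    refine Finset.sum_eq_zero fun i _ => ?_
    rw [inner_smul_right, key _ (halfe_mem_ball i), mul_zero]
  have := inner_self_eq_zero.mp key2
  exact sub_eq_zero.mp this

theorem inner_preserving_holomorphic_map_is_linear_isometry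
    (n m : ℕ) (hn : 0 < n) (hm : 0 < m)
    (f : EuclideanSpace ℂ (Fin n) → EuclideanSpace ℂ (Fin m))
    (hf_maps : ∀ z ∈ Metric.ball (0 : EuclideanSpace ℂ (Fin n)) 1,
      f z ∈ Metric.ball (0 : EuclideanSpace ℂ (Fin m)) 1)
    (hf_holo : DifferentiableOn ℂ f (Metric.ball 0 1))
    (hf0 : f 0 = 0)
    (heq : ∀ z ∈ Metric.ball (0 : EuclideanSpace ℂ (Fin n)) 1,
           ∀ w ∈ Metric.ball (0 : EuclideanSpace ℂ (Fin n)) 1,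
      herm (f z) (f w) = herm z w) :
    ∃ L : EuclideanSpace ℂ (Fin n) →ₗ[ℂ] EuclideanSpace ℂ (Fin m),
      (∀ v, ‖L v‖ = ‖v‖) ∧
      ∀ z ∈ Metric.ball (0 : EuclideanSpace ℂ (Fin n)) 1, f z = L z := by
  have hinner : ∀ u ∈ Metric.ball (0 : EuclideanSpace ℂ (Fin n)) 1,
      ∀ v ∈ Metric.ball (0 : EuclideanSpace ℂ (Fin n)) 1,
      ⟪f u, f v⟫_ℂ = ⟪u, v⟫_ℂ := by
    intro u hu v hv
    have := heq v hv u hu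
    rwa [herm_eq_inner, herm_eq_inner] at this
  set L : EuclideanSpace ℂ (Fin n) →ₗ[ℂ] EuclideanSpace ℂ (Fin m) :=
    { toFun := fun v => ∑ i, (2 * v i) • f (halfe i)
      map_add' := by
        intro u v
        rw [← Finset.sum_add_distrib]
        refine Finset.sum_congr rfl fun i _ => ?_
        have : (u + v) i = u i + v i := rfl
        rw [this, mul_add, add_smul]
      map_smul' := by
        intro c v
        show (∑ i, (2 * (c • v) i) • f (halfe i)) = _
        rw [RingHom.id_apply, Finset.smul_sum]
        exact Finset.sum_congr rfl fun i _ => by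
          rw [show (c • v) i = c * v i from rfl, smul_smul,
            show c * (2 * v i) = 2 * (c * v i) from by ring] }
    with hLdef
  have hLf : ∀ z ∈ Metric.ball (0 : EuclideanSpace ℂ (Fin n)) 1, f z = L z := by
    intro z hz
    exact decomp f hinner z hz
  have hfnorm : ∀ w ∈ Metric.ball (0 : EuclideanSpace ℂ (Fin n)) 1, ‖f w‖ = ‖w‖ := by
    intro w hw
    have h := hinner w hw w hw
    rw [inner_self_eq_norm_sq_to_K, inner_self_eq_norm_sq_to_K] at h
    have h2 : (‖f w‖ : ℝ)^2 = (‖w‖ : ℝ)^2 := by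
      exact_mod_cast h
    nlinarith [norm_nonneg (f w), norm_nonneg w]
  refine ⟨L, ?_, hLf⟩
  intro v
  rcases eq_or_ne v 0 with rfl | hv
  · simp
  · have hr : (0 : ℝ) < ‖v‖ := norm_pos_iff.mpr hv
    set c : ℂ := (((2 * ‖v‖)⁻¹ : ℝ) : ℂ) with hc
    have hcnorm : ‖c‖ = (2 * ‖v‖)⁻¹ := by
      rw [hc, Complex.norm_real, Real.norm_eq_abs, abs_of_pos (by positivity)]
    have hw : c • v ∈ Metric.ball (0 : EuclideanSpace ℂ (Fin n)) 1 := by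
      rw [Metric.mem_ball, dist_zero_right, norm_smul, hcnorm]
      rw [inv_mul_eq_div, div_lt_one (by positivity)]
      linarith
    have h1 : ‖L (c • v)‖ = ‖c • v‖ := by
      rw [← hLf _ hw, hfnorm _ hw]
    rw [map_smul, norm_smul, norm_smul] at h1
    have hcne : ‖c‖ ≠ 0 := by rw [hcnorm]; positivity
    exact mul_left_cancel₀ hcne h1
end

section
/- Let n, m be positive integers, let s be a positive real number, and let f : B^n → B^m be a holomorphic map with f(0) = 0 such that 1 − ⟨f(z), f(w)⟩ = (1 − ⟨z,w⟩)^s for all z, w ∈ B^n, where the complex power is the principal branch. Then s is a positive integer. -/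
open ComplexConjugate Filter Set

private lemma iterDeriv_congr {F G : ℂ → ℂ} {U : Set ℂ} (hU : IsOpen U) (h : Set.EqOn F G U) :
    ∀ k : ℕ, Set.EqOn (iteratedDeriv k F) (iteratedDeriv k G) U := by
  intro k
  induction k with
  | zero => simpa using h
  | succ k ih =>
    intro x hx
    rw [iteratedDeriv_succ, iteratedDeriv_succ]
    exact Filter.EventuallyEq.deriv_eq (Filter.eventuallyEq_of_mem (hU.mem_nhds hx) ih)

private lemma an_iter {F : ℂ → ℂ} {U : Set ℂ} (hF : AnalyticOnNhd ℂ F U) :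
    ∀ k : ℕ, AnalyticOnNhd ℂ (iteratedDeriv k F) U := by
  intro k
  induction k with
  | zero => simpa using hF
  | succ k ih => rw [iteratedDeriv_succ]; exact ih.deriv

private lemma iterDeriv_sum_mul {m : ℕ} {g : Fin m → ℂ → ℂ} {U : Set ℂ} (hU : IsOpen U)
    (hg : ∀ j, AnalyticOnNhd ℂ (g j) U) (c : Fin m → ℂ) :
    ∀ (k : ℕ), ∀ x ∈ U,
      iteratedDeriv k (fun y => ∑ j, g j y * c j) x = ∑ j, iteratedDeriv k (g j) x * c j := by
  intro k
  induction k with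
  | zero => intro x _; simp
  | succ k ih =>
    intro x hx
    rw [iteratedDeriv_succ]
    have h1 : deriv (iteratedDeriv k fun y => ∑ j, g j y * c j) x
        = deriv (fun y => ∑ j, iteratedDeriv k (g j) y * c j) x :=
      Filter.EventuallyEq.deriv_eq (Filter.eventuallyEq_of_mem (hU.mem_nhds hx) ih)
    rw [h1, deriv_fun_sum (fun j _ => ((an_iter (hg j) k x hx).differentiableAt).mul_const _)]
    refine Finset.sum_congr rfl fun j _ => ?_
    rw [deriv_mul_const ((an_iter (hg j) k x hx).differentiableAt), iteratedDeriv_succ]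

private lemma iterDeriv_add {F G : ℂ → ℂ} {U : Set ℂ} (hU : IsOpen U)
    (hF : AnalyticOnNhd ℂ F U) (hG : AnalyticOnNhd ℂ G U) :
    ∀ (k : ℕ), ∀ x ∈ U,
      iteratedDeriv k (fun y => F y + G y) x = iteratedDeriv k F x + iteratedDeriv k G x := by
  intro k
  induction k with
  | zero => intro x _; simp
  | succ k ih =>
    intro x hx
    rw [iteratedDeriv_succ]
    have h1 : deriv (iteratedDeriv k fun y => F y + G y) x
        = deriv (fun y => iteratedDeriv k F y + iteratedDeriv k G y) x :=
      Filter.EventuallyEq.deriv_eq (Filter.eventuallyEq_of_mem (hU.mem_nhds hx) ih)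
    rw [h1, deriv_fun_add ((an_iter hF k x hx).differentiableAt)
      ((an_iter hG k x hx).differentiableAt), iteratedDeriv_succ, iteratedDeriv_succ]

private lemma hasDerivAt_aux {a x : ℂ} (c : ℂ) (ha : ‖a‖ < 1) (hx : x ∈ Metric.ball (0:ℂ) 1) :
    HasDerivAt (fun y => (1 - a * y) ^ c) (c * (1 - a * x) ^ (c - 1) * (-a)) x := by
  have hd : HasDerivAt (fun y : ℂ => 1 - a * y) (-a) x := by
    simpa using (hasDerivAt_const x (1:ℂ)).fun_sub ((hasDerivAt_id x).const_mul a)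
  refine hd.cpow_const ?_
  have hxn : ‖x‖ < 1 := by simpa using mem_ball_zero_iff.mp hx
  have h1 : ‖a * x‖ < 1 := by
    rw [norm_mul]
    nlinarith [norm_nonneg a, norm_nonneg x]
  have h2 : (a * x).re < 1 := lt_of_le_of_lt (Complex.re_le_norm _) h1
  refine Complex.mem_slitPlane_iff.mpr (Or.inl ?_)
  simp only [Complex.sub_re, Complex.one_re]
  linarith

private lemma iterDeriv_cpow {a : ℂ} (ha : ‖a‖ < 1) (s : ℝ) :
    ∀ (k : ℕ), ∀ x ∈ Metric.ball (0:ℂ) 1,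
      iteratedDeriv k (fun y => (1 - a * y) ^ (s : ℂ)) x
        = (∏ i ∈ Finset.range k, ((s:ℂ) - i)) * (-a) ^ k * (1 - a * x) ^ ((s:ℂ) - k) := by
  intro k
  induction k with
  | zero => intro x _; simp
  | succ k ih =>
    intro x hx
    rw [iteratedDeriv_succ]
    have h1 : deriv (iteratedDeriv k fun y => (1 - a * y) ^ (s:ℂ)) x
        = deriv (fun y => (∏ i ∈ Finset.range k, ((s:ℂ) - i)) * (-a) ^ k
            * (1 - a * y) ^ ((s:ℂ) - k)) x :=
      Filter.EventuallyEq.deriv_eq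
        (Filter.eventuallyEq_of_mem (Metric.isOpen_ball.mem_nhds hx) ih)
    have hd := hasDerivAt_aux ((s:ℂ) - k) ha hx
    have h2 : deriv (fun y => (∏ i ∈ Finset.range k, ((s:ℂ) - i)) * (-a) ^ k
        * (1 - a * y) ^ ((s:ℂ) - k)) x
        = (∏ i ∈ Finset.range k, ((s:ℂ) - i)) * (-a) ^ k
            * (((s:ℂ) - k) * (1 - a * x) ^ ((s:ℂ) - k - 1) * (-a)) := by
      rw [deriv_const_mul _ hd.differentiableAt, hd.deriv]
    have he : (s:ℂ) - (k:ℂ) - 1 = (s:ℂ) - ((k+1 : ℕ) : ℂ) := by push_cast; ring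
    rw [h1, h2, Finset.prod_range_succ, he]
    ring

private lemma iterDeriv_pow_zero (c : ℂ) (k : ℕ) :
    ∀ l : ℕ, iteratedDeriv l (fun x : ℂ => c * x ^ k) 0
      = if l = k then c * (k.factorial : ℂ) else 0 := by
  have H : ∀ (l : ℕ) (x : ℂ), iteratedDeriv l (fun x : ℂ => c * x ^ k) x
      = c * (k.descFactorial l : ℂ) * x ^ (k - l) := by
    intro l
    induction l with
    | zero => intro x; simp
    | succ l ih =>
      intro x
      rw [iteratedDeriv_succ]
      have h1 : iteratedDeriv l (fun x : ℂ => c * x ^ k)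
          = fun x => c * (k.descFactorial l : ℂ) * x ^ (k - l) := funext ih
      rw [h1, deriv_const_mul _ (differentiableAt_pow _), deriv_pow_field, Nat.descFactorial_succ]
      have h2 : k - (l + 1) = k - l - 1 := by omega
      rw [h2]
      push_cast
      ring
  intro l
  rw [H l 0]
  by_cases hlk : l = k
  · subst hlk
    simp [Nat.descFactorial_self]
  · rcases lt_or_gt_of_ne hlk with h | h
    · have h2 : k - l ≠ 0 := by omega
      simp [zero_pow h2, hlk]
    · have h2 : k.descFactorial l = 0 := Nat.descFactorial_eq_zero_iff_lt.mpr h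
      simp [h2, hlk]

private lemma main_aux (m : ℕ) (s : ℝ) (g : Fin m → ℂ → ℂ)
    (hg : ∀ j, AnalyticOnNhd ℂ (g j) (Metric.ball 0 1))
    (hkey : ∀ ζ ∈ Metric.ball (0:ℂ) 1, ∀ ω ∈ Metric.ball (0:ℂ) 1,
      (∑ j, g j ζ * conj (g j ω)) + (1 - (conj ω) * ζ) ^ (s:ℂ) = 1)
    (hcon : ∀ d : ℕ, s ≠ (d : ℝ)) : False := by
  set D := Metric.ball (0:ℂ) 1 with hD
  have h0D : (0:ℂ) ∈ D := by simp [hD]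
  set C : ℕ → ℂ := fun k => ∏ i ∈ Finset.range k, ((s:ℂ) - i) with hC
  have hCne : ∀ k, C k ≠ 0 := by
    intro k
    rw [hC]
    refine Finset.prod_ne_zero_iff.mpr fun i _ => sub_ne_zero.mpr ?_
    intro h
    exact hcon i (by exact_mod_cast h)
  have hCconj : ∀ k, conj (C k) = C k := by
    intro k
    rw [hC]
    rw [map_prod]
    exact Finset.prod_congr rfl fun i _ => by simp
  have hQan : ∀ a : ℂ, ‖a‖ < 1 → AnalyticOnNhd ℂ (fun ζ => (1 - a * ζ) ^ (s:ℂ)) D := by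
    intro a ha
    refine DifferentiableOn.analyticOnNhd (fun x hx => ?_) Metric.isOpen_ball
    exact (hasDerivAt_aux (s:ℂ) ha hx).differentiableAt.differentiableWithinAt
  have hsum_an : ∀ c : Fin m → ℂ, AnalyticOnNhd ℂ (fun ζ => ∑ j, g j ζ * c j) D := by
    intro c
    refine DifferentiableOn.analyticOnNhd ?_ Metric.isOpen_ball
    exact DifferentiableOn.fun_sum fun j _ => ((hg j).differentiableOn).mul_const _
  -- Step A
  have hA : ∀ (k : ℕ), ∀ ω ∈ D,
      ∑ j, iteratedDeriv (k+1) (g j) 0 * conj (g j ω)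
        = -(C (k+1) * (-(conj ω))^(k+1)) := by
    intro k ω hω
    set a := conj ω with haa
    have ha : ‖a‖ < 1 := by
      rw [haa, RCLike.norm_conj]
      simpa using mem_ball_zero_iff.mp hω
    have hEq : Set.EqOn (fun ζ => (∑ j, g j ζ * conj (g j ω)) + (1 - a * ζ) ^ (s:ℂ))
        (fun _ => (1:ℂ)) D := fun ζ hζ => hkey ζ hζ ω hω
    have e1 := iterDeriv_congr Metric.isOpen_ball hEq (k+1) h0D
    have e2 : iteratedDeriv (k+1) (fun _ : ℂ => (1:ℂ)) 0 = 0 := by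
      have h' : (fun _ : ℂ => (1:ℂ)) = fun x : ℂ => (1:ℂ) * x ^ 0 := by funext x; simp
      rw [h', iterDeriv_pow_zero]
      simp
    have e3 := iterDeriv_add Metric.isOpen_ball (hsum_an fun j => conj (g j ω)) (hQan a ha)
      (k+1) 0 h0D
    have e4 := iterDeriv_sum_mul Metric.isOpen_ball hg (fun j => conj (g j ω)) (k+1) 0 h0D
    have e5 := iterDeriv_cpow ha s (k+1) 0 h0D
    simp only [mul_zero, sub_zero, Complex.one_cpow] at e5
    rw [e4, e5] at e3
    rw [e2, e3] at e1
    have h6 : ∑ j, iteratedDeriv (k+1) (g j) 0 * (fun j => conj (g j ω)) j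
        = -(C (k+1) * (-a)^(k+1)) := by
      simp only [hC]
      linear_combination e1
    exact h6
  -- Step B
  have hB : ∀ k l : ℕ,
      ∑ j, iteratedDeriv (l+1) (g j) 0 * conj (iteratedDeriv (k+1) (g j) 0)
        = if l + 1 = k + 1 then (-(C (k+1)) * (-1)^(k+1)) * ((k+1).factorial : ℂ) else 0 := by
    intro k l
    set c : Fin m → ℂ := fun j => conj (iteratedDeriv (k+1) (g j) 0) with hc
    have hψ : Set.EqOn (fun ω => ∑ j, g j ω * c j)
        (fun ω => (-(C (k+1)) * (-1)^(k+1)) * ω ^ (k+1)) D := by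
      intro ω hω
      have h1 := hA k ω hω
      have h2 : (∑ j, g j ω * c j)
          = conj (∑ j, iteratedDeriv (k+1) (g j) 0 * conj (g j ω)) := by
        rw [map_sum]
        refine Finset.sum_congr rfl fun j _ => ?_
        simp only [hc, map_mul, Complex.conj_conj]
        ring
      show (∑ j, g j ω * c j) = (-(C (k+1)) * (-1)^(k+1)) * ω ^ (k+1)
      rw [h2, h1]
      simp only [map_neg, map_mul, map_pow, Complex.conj_conj, hCconj]
      ring
    have e1 := iterDeriv_congr Metric.isOpen_ball hψ (l+1) h0D
    have e2 := iterDeriv_sum_mul Metric.isOpen_ball hg c (l+1) 0 h0D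
    have e3 := iterDeriv_pow_zero (-(C (k+1)) * (-1)^(k+1)) (k+1) (l+1)
    rw [e2, e3] at e1
    exact e1
  -- build m+1 pairwise orthogonal nonzero vectors in ℂ^m
  set V : Fin (m+1) → EuclideanSpace ℂ (Fin m) :=
    fun i => (WithLp.equiv 2 (Fin m → ℂ)).symm (fun j => iteratedDeriv (i.1+1) (g j) 0) with hV
  have hinner : ∀ i i' : Fin (m+1),
      (inner ℂ (V i) (V i') : ℂ)
        = ∑ j, iteratedDeriv (i'.1+1) (g j) 0 * conj (iteratedDeriv (i.1+1) (g j) 0) := by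
    intro i i'
    rw [PiLp.inner_apply]
    refine Finset.sum_congr rfl fun j _ => ?_
    simp only [hV, RCLike.inner_apply, WithLp.equiv_symm_apply, PiLp.toLp_apply]
  have hMne : ∀ k : ℕ, (-(C (k+1)) * (-1)^(k+1)) * ((k+1).factorial : ℂ) ≠ 0 := by
    intro k
    refine mul_ne_zero (mul_ne_zero (neg_ne_zero.mpr (hCne (k+1))) (pow_ne_zero _ (by norm_num)))
      (by exact_mod_cast (k+1).factorial_ne_zero)
  have hVne : ∀ i, V i ≠ 0 := by
    intro i hzero
    have h1 : (inner ℂ (V i) (V i) : ℂ) = 0 := by rw [hzero]; simp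
    rw [hinner i i, hB i.1 i.1, if_pos rfl] at h1
    exact hMne i.1 h1
  have hpair : Pairwise fun i i' : Fin (m+1) => (inner ℂ (V i) (V i') : ℂ) = 0 := by
    intro i i' hne
    rw [hinner i i', hB i.1 i'.1, if_neg]
    intro h
    exact hne (Fin.ext (by omega)).symm
  have hli := linearIndependent_of_ne_zero_of_inner_eq_zero hVne hpair
  have hcard := hli.fintype_card_le_finrank
  rw [finrank_euclideanSpace_fin, Fintype.card_fin] at hcard
  omega

theorem exponent_is_positive_integer_of_polarized_functional_equation
    (n m : ℕ) (hn : 0 < n) (hm : 0 < m) (s : ℝ) (hs : 0 < s)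
    (f : EuclideanSpace ℂ (Fin n) → EuclideanSpace ℂ (Fin m))
    (hf_maps : ∀ z ∈ Metric.ball (0 : EuclideanSpace ℂ (Fin n)) 1,
      f z ∈ Metric.ball (0 : EuclideanSpace ℂ (Fin m)) 1)
    (hf_holo : DifferentiableOn ℂ f (Metric.ball 0 1))
    (hf0 : f 0 = 0)
    (heq : ∀ z ∈ Metric.ball (0 : EuclideanSpace ℂ (Fin n)) 1,
           ∀ w ∈ Metric.ball (0 : EuclideanSpace ℂ (Fin n)) 1,
      1 - herm (f z) (f w) = (1 - herm z w) ^ (s : ℂ)) :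
    ∃ d : ℕ, 0 < d ∧ s = (d : ℝ) := by
  by_contra hcontra
  push_neg at hcontra
  have hcon : ∀ d : ℕ, s ≠ (d : ℝ) := by
    intro d
    cases d with
    | zero => simpa using hs.ne'
    | succ d => exact hcontra (d+1) (Nat.succ_pos d)
  set i0 : Fin n := ⟨0, hn⟩ with hi0
  set e1 : EuclideanSpace ℂ (Fin n) := EuclideanSpace.single i0 1 with he1
  have hnorm_e1 : ‖e1‖ = 1 := by rw [he1, EuclideanSpace.norm_single]; simp
  have hmem : ∀ ζ : ℂ, ζ ∈ Metric.ball (0:ℂ) 1 →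
      ζ • e1 ∈ Metric.ball (0 : EuclideanSpace ℂ (Fin n)) 1 := by
    intro ζ hζ
    rw [mem_ball_zero_iff, norm_smul, hnorm_e1, mul_one]
    simpa using mem_ball_zero_iff.mp hζ
  set g : Fin m → ℂ → ℂ := fun j ζ => f (ζ • e1) j with hg
  have hg_an : ∀ j, AnalyticOnNhd ℂ (g j) (Metric.ball 0 1) := by
    intro j
    refine DifferentiableOn.analyticOnNhd ?_ Metric.isOpen_ball
    have hsm : DifferentiableOn ℂ (fun ζ : ℂ => ζ • e1) (Metric.ball 0 1) :=
      (differentiable_id.smul_const e1).differentiableOn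
    have hcomp : DifferentiableOn ℂ (fun ζ : ℂ => f (ζ • e1)) (Metric.ball 0 1) :=
      hf_holo.comp hsm fun ζ hζ => hmem ζ hζ
    exact (EuclideanSpace.proj j).differentiable.comp_differentiableOn hcomp
  have hherm : ∀ ζ ω : ℂ, herm (ζ • e1) (ω • e1) = (conj ω) * ζ := by
    intro ζ ω
    rw [herm, Finset.sum_eq_single i0]
    · rw [PiLp.smul_apply, PiLp.smul_apply, he1]
      simp [EuclideanSpace.single_apply, mul_comm]
    · intro b _ hb
      rw [PiLp.smul_apply, he1]
      simp [EuclideanSpace.single_apply, hb]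
    · intro h
      exact absurd (Finset.mem_univ i0) h
  have hkey : ∀ ζ ∈ Metric.ball (0:ℂ) 1, ∀ ω ∈ Metric.ball (0:ℂ) 1,
      (∑ j, g j ζ * conj (g j ω)) + (1 - (conj ω) * ζ) ^ (s:ℂ) = 1 := by
    intro ζ hζ ω hω
    have h1 := heq (ζ • e1) (hmem ζ hζ) (ω • e1) (hmem ω hω)
    rw [hherm] at h1
    have h2 : herm (f (ζ • e1)) (f (ω • e1)) = ∑ j, g j ζ * conj (g j ω) := by
      rw [herm, hg]
    rw [h2] at h1
    linear_combination -h1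
  exact main_aux m s g hg_an hkey hcon
end

section
/- Let λ, μ be positive real numbers and let f : Δ → Δ be a holomorphic map for which there exists a nowhere-vanishing holomorphic function h on Δ with (1−|f(z)|²)^μ = |h(z)|²(1−|z|²)^λ for all z ∈ Δ. Then λ = μ and f is a holomorphic automorphism of the unit disk: there exist θ ∈ ℝ and a ∈ Δ such that f(z) = e^{iθ}(z−a)/(1−conj(a)·z) for all z ∈ Δ. -/
/-!
STATEMENT 7: A holomorphic isometry `f : (Δ, λ g_Δ) → (Δ, μ g_Δ)` of the unit disk, expressed
by the functional equation `(1−|f(z)|²)^μ = |h(z)|²(1−|z|²)^λ` with `h` holomorphic and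
nowhere vanishing, satisfies `λ = μ` and is a Möbius automorphism
`f(z) = e^{iθ}(z−a)/(1−conj(a)z)` of the disk.
-/

open Complex Metric
set_option maxHeartbeats 1000000

lemma slit_of_norm_lt_one {u : ℂ} (hu : ‖u‖ < 1) : 1 - u ∈ Complex.slitPlane := by
  rw [Complex.mem_slitPlane_iff]
  left
  have h1 : u.re ≤ ‖u‖ := Complex.re_le_norm u
  have h2 : ‖u‖ < 1 := hu
  simp only [Complex.sub_re, Complex.one_re]
  linarith

lemma hasDerivAt_conj_conj {f : ℂ → ℂ} {d z : ℂ} (hf : HasDerivAt f d ((starRingEnd ℂ) z)) :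
    HasDerivAt (fun w => (starRingEnd ℂ) (f ((starRingEnd ℂ) w))) ((starRingEnd ℂ) d) z := by
  have hc : HasFDerivAt (⇑(starRingEnd ℂ)) (Complex.conjCLE : ℂ →L[ℝ] ℂ) z :=
    Complex.conjCLE.toContinuousLinearMap.hasFDerivAt
  have hc2 : HasFDerivAt (⇑(starRingEnd ℂ)) (Complex.conjCLE : ℂ →L[ℝ] ℂ)
      (f ((starRingEnd ℂ) z)) := Complex.conjCLE.toContinuousLinearMap.hasFDerivAt
  have hf' : HasFDerivAt f ((ContinuousLinearMap.smulRight (1 : ℂ →L[ℂ] ℂ) d).restrictScalars ℝ)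
      ((starRingEnd ℂ) z) := hf.hasFDerivAt.restrictScalars ℝ
  have hcomp := hc2.comp z (hf'.comp z hc)
  have heqmap : ((Complex.conjCLE : ℂ →L[ℝ] ℂ).comp
        (((ContinuousLinearMap.smulRight (1 : ℂ →L[ℂ] ℂ) d).restrictScalars ℝ).comp
          (Complex.conjCLE : ℂ →L[ℝ] ℂ)))
      = (ContinuousLinearMap.smulRight (1 : ℂ →L[ℂ] ℂ) ((starRingEnd ℂ) d)).restrictScalars ℝ := by
    ext x
    simp [Complex.conjCLE_apply, mul_comm]
  rw [heqmap] at hcomp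
  rw [hasDerivAt_iff_isLittleO]
  simpa [smul_eq_mul, mul_comm] using hcomp.isLittleO

lemma diffAt_conj_conj {f : ℂ → ℂ} {z : ℂ} (hf : DifferentiableOn ℂ f (ball 0 1))
    (hz : ‖z‖ < 1) :
    DifferentiableAt ℂ (fun w => (starRingEnd ℂ) (f ((starRingEnd ℂ) w))) z := by
  have hz' : (starRingEnd ℂ) z ∈ ball (0:ℂ) 1 := by
    rw [mem_ball_zero_iff]; simpa using hz
  have h1 : DifferentiableAt ℂ f ((starRingEnd ℂ) z) :=
    hf.differentiableAt (isOpen_ball.mem_nhds hz')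
  exact (hasDerivAt_conj_conj h1.hasDerivAt).differentiableAt

-- identity theorem helper
lemma zero_of_real_zero {g : ℂ → ℂ} {r : ℝ} (hr : 0 < r)
    (hg : DifferentiableOn ℂ g (ball 0 r))
    (h0 : ∀ x : ℝ, |x| < r → g x = 0) :
    ∀ z ∈ ball (0:ℂ) r, g z = 0 := by
  have han : AnalyticOnNhd ℂ g (ball 0 r) := hg.analyticOnNhd isOpen_ball
  have hfreq : ∃ᶠ z in nhdsWithin (0:ℂ) {(0:ℂ)}ᶜ, g z = 0 := by
    rw [Filter.frequently_iff]
    intro U hU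
    rw [mem_nhdsWithin] at hU
    obtain ⟨V, hVopen, hV0, hVsub⟩ := hU
    obtain ⟨ε, hε, hball⟩ := Metric.isOpen_iff.mp hVopen 0 hV0
    set x : ℝ := min ε r / 2 with hx
    have hxpos : 0 < min ε r / 2 := by positivity
    refine ⟨(x:ℂ), hVsub ⟨hball ?_, ?_⟩, h0 x ?_⟩
    · rw [mem_ball_zero_iff]
      simp only [Complex.norm_real, Real.norm_eq_abs, hx]
      rw [abs_of_pos hxpos]
      have := min_le_left ε r; linarith
    · simp only [Set.mem_compl_iff, Set.mem_singleton_iff]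
      exact_mod_cast ne_of_gt hxpos
    · rw [abs_of_pos hxpos]
      have := min_le_right ε r; linarith
  have := han.eqOn_zero_of_preconnected_of_frequently_eq_zero
    (convex_ball (0:ℂ) r).isPreconnected (mem_ball_self hr) hfreq
  exact fun z hz => this hz

lemma vanish2 {Φ : ℂ → ℂ → ℂ}
    (hΦ : ∀ p : ℂ × ℂ, p.1 ∈ ball (0:ℂ) 1 → p.2 ∈ ball (0:ℂ) 1 →
      DifferentiableAt ℂ (fun q : ℂ × ℂ => Φ q.1 q.2) p)
    (hdiag : ∀ z ∈ ball (0:ℂ) 1, Φ z ((starRingEnd ℂ) z) = 0) :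
    ∀ z ∈ ball (0:ℂ) (1/4), ∀ w ∈ ball (0:ℂ) (1/4), Φ z w = 0 := by
  have hmem : ∀ x y : ℂ, ‖x‖ < 1/4 → ‖y‖ < 1/4 →
      (x + y * I ∈ ball (0:ℂ) 1 ∧ x - y * I ∈ ball (0:ℂ) 1) := by
    intro x y hx hy
    constructor <;> rw [mem_ball_zero_iff]
    · calc ‖x + y * I‖ ≤ ‖x‖ + ‖y * I‖ := norm_add_le _ _
        _ < 1 := by rw [norm_mul, Complex.norm_I, mul_one]; linarith
    · calc ‖x - y * I‖ ≤ ‖x‖ + ‖y * I‖ := norm_sub_le _ _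
        _ < 1 := by rw [norm_mul, Complex.norm_I, mul_one]; linarith
  have hdiff : ∀ x y : ℂ, ‖x‖ < 1/4 → ‖y‖ < 1/4 →
      DifferentiableAt ℂ (fun q : ℂ × ℂ => Φ q.1 q.2) (x + y * I, x - y * I) := by
    intro x y hx hy
    exact hΦ _ (hmem x y hx hy).1 (hmem x y hx hy).2
  -- step (ii): for fixed real y, x ↦ Φ (x+yI) (x−yI) vanishes on complex ball
  have step2 : ∀ y : ℝ, |y| < 1/4 → ∀ x ∈ ball (0:ℂ) (1/4),
      Φ (x + y * I) (x - y * I) = 0 := by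
    intro y hy
    apply zero_of_real_zero (by norm_num)
    · intro x hx
      have hx' : ‖x‖ < 1/4 := mem_ball_zero_iff.mp hx
      have hy' : ‖(y:ℂ)‖ < 1/4 := by simpa using hy
      have h1 : DifferentiableAt ℂ (fun x : ℂ => (x + (y:ℂ) * I, x - (y:ℂ) * I)) x :=
        DifferentiableAt.prodMk (by fun_prop) (by fun_prop)
      exact ((hdiff x y hx' hy').comp x h1).differentiableWithinAt
    · intro x hx
      have hx' : ‖(x:ℂ)‖ < 1/4 := by simpa using hx
      have hy' : ‖(y:ℂ)‖ < 1/4 := by simpa using hy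
      have hc : (starRingEnd ℂ) ((x:ℂ) + (y:ℂ) * I) = (x:ℂ) - (y:ℂ) * I := by
        simp [Complex.conj_ofReal]; ring
      have := hdiag ((x:ℂ) + (y:ℂ) * I) (hmem _ _ hx' hy').1
      rwa [hc] at this
  -- step (iii): fixed complex x, vanish in y
  have step3 : ∀ x ∈ ball (0:ℂ) (1/4), ∀ y ∈ ball (0:ℂ) (1/4),
      Φ (x + y * I) (x - y * I) = 0 := by
    intro x hx
    have hx' : ‖x‖ < 1/4 := mem_ball_zero_iff.mp hx
    apply zero_of_real_zero (by norm_num)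
    · intro y hy
      have hy' : ‖y‖ < 1/4 := mem_ball_zero_iff.mp hy
      have h1 : DifferentiableAt ℂ (fun y : ℂ => (x + y * I, x - y * I)) y :=
        DifferentiableAt.prodMk (by fun_prop) (by fun_prop)
      exact ((hdiff x y hx' hy').comp y h1).differentiableWithinAt
    · intro y hy
      exact step2 y hy x hx
  intro z hz w hw
  have hz' : ‖z‖ < 1/4 := mem_ball_zero_iff.mp hz
  have hw' : ‖w‖ < 1/4 := mem_ball_zero_iff.mp hw
  set x : ℂ := (z + w) / 2 with hxdef
  set y : ℂ := (w - z) * I / 2 with hydef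
  have hx : x ∈ ball (0:ℂ) (1/4) := by
    rw [mem_ball_zero_iff, hxdef]
    calc ‖(z + w)/2‖ = ‖z + w‖ / 2 := by rw [norm_div]; norm_num
      _ ≤ (‖z‖ + ‖w‖) / 2 := by gcongr; exact norm_add_le _ _
      _ < 1/4 := by linarith
  have hy : y ∈ ball (0:ℂ) (1/4) := by
    rw [mem_ball_zero_iff, hydef]
    have : ‖(w - z) * I / 2‖ = ‖w - z‖ / 2 := by
      rw [norm_div, norm_mul, Complex.norm_I, mul_one]; norm_num
    rw [this]
    calc ‖w - z‖ / 2 ≤ (‖w‖ + ‖z‖) / 2 := by gcongr; exact norm_sub_le _ _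
      _ < 1/4 := by linarith
  have h1 : x + y * I = z := by
    rw [hxdef, hydef]; field_simp; ring_nf; rw [Complex.I_sq]; ring
  have h2 : x - y * I = w := by
    rw [hxdef, hydef]; field_simp; ring_nf; rw [Complex.I_sq]; ring
  have := step3 x hx y hy
  rwa [h1, h2] at this

lemma const_of_lattice {α : Type*} [TopologicalSpace α] {S : Set α} (hS : IsPreconnected S)
    {g : α → ℂ} (hg : ContinuousOn g S)
    (hlat : ∀ p ∈ S, ∃ n : ℤ, g p = n * (2 * Real.pi * I))
    {p₀ : α} (hp₀ : p₀ ∈ S) (h0 : g p₀ = 0) :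
    ∀ p ∈ S, g p = 0 := by
  by_contra hcon
  push_neg at hcon
  obtain ⟨q, hq, hgq⟩ := hcon
  have hT : IsPreconnected (g '' S) := hS.image g hg
  have hsub : g '' S ⊆ ball (0:ℂ) 3 ∪ (closedBall (0:ℂ) 3)ᶜ := by
    rintro _ ⟨p, hp, rfl⟩
    obtain ⟨n, hn⟩ := hlat p hp
    rcases eq_or_ne n 0 with h | h
    · left; rw [mem_ball_zero_iff, hn, h]; norm_num
    · right
      simp only [Set.mem_compl_iff, mem_closedBall, not_le, dist_zero_right]
      rw [hn]
      have h1 : (1:ℝ) ≤ |(n:ℝ)| := by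
        rw [← Int.cast_abs]
        exact_mod_cast Int.one_le_abs h
      have hpi : (3:ℝ) < 2 * Real.pi := by
        have := Real.pi_gt_three; linarith
      calc (3:ℝ) < 2 * Real.pi := hpi
        _ ≤ |(n:ℝ)| * (2 * Real.pi) := by nlinarith [Real.pi_pos]
        _ = ‖(n:ℂ) * (2 * Real.pi * I)‖ := by
            rw [norm_mul, norm_mul, norm_mul, Complex.norm_I, mul_one]
            simp [Complex.norm_real, abs_of_pos Real.pi_pos]
  have hU : (g '' S ∩ (ball (0:ℂ) 3 ∩ (closedBall (0:ℂ) 3)ᶜ)).Nonempty := by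
    apply hT _ _ isOpen_ball (isClosed_closedBall.isOpen_compl) hsub
    · exact ⟨0, ⟨p₀, hp₀, h0⟩, by simp⟩
    · refine ⟨g q, ⟨q, hq, rfl⟩, ?_⟩
      obtain ⟨n, hn⟩ := hlat q hq
      have h : n ≠ 0 := by
        intro h; rw [h] at hn; simp at hn; exact hgq hn
      simp only [Set.mem_compl_iff, mem_closedBall, not_le, dist_zero_right]
      rw [hn]
      have h1 : (1:ℝ) ≤ |(n:ℝ)| := by rw [← Int.cast_abs]; exact_mod_cast Int.one_le_abs h
      have hpi : (3:ℝ) < 2 * Real.pi := by have := Real.pi_gt_three; linarith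
      calc (3:ℝ) < 2 * Real.pi := hpi
        _ ≤ |(n:ℝ)| * (2 * Real.pi) := by nlinarith [Real.pi_pos]
        _ = ‖(n:ℂ) * (2 * Real.pi * I)‖ := by
            rw [norm_mul, norm_mul, norm_mul, Complex.norm_I, mul_one]
            simp [Complex.norm_real, abs_of_pos Real.pi_pos]
  obtain ⟨_, _, hmem2⟩ := hU
  exact hmem2.2 (ball_subset_closedBall hmem2.1)

lemma cexp_ofReal_mul_log {r s : ℝ} (hr : 0 < r) :
    Complex.exp ((s:ℂ) * Complex.log ((r:ℝ):ℂ)) = ((r ^ s : ℝ) : ℂ) := by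
  rw [← Complex.ofReal_log hr.le, ← Complex.ofReal_mul, ← Complex.ofReal_exp,
    Real.rpow_def_of_pos hr, mul_comm]

lemma one_sub_ne_zero_of_norm_lt_one {u : ℂ} (hu : ‖u‖ < 1) : 1 - u ≠ 0 := by
  intro h
  have : u = 1 := by linear_combination -h
  rw [this] at hu; simp at hu

theorem part1
    (lam mu : ℝ) (hlam : 0 < lam) (hmu : 0 < mu)
    (f : ℂ → ℂ)
    (hf_maps : ∀ z ∈ Metric.ball (0 : ℂ) 1, f z ∈ Metric.ball (0 : ℂ) 1)
    (hf_holo : DifferentiableOn ℂ f (Metric.ball 0 1))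
    (h : ℂ → ℂ)
    (hh_holo : DifferentiableOn ℂ h (Metric.ball 0 1))
    (hh_ne : ∀ z ∈ Metric.ball (0 : ℂ) 1, h z ≠ 0)
    (heq : ∀ z ∈ Metric.ball (0 : ℂ) 1,
      (1 - ‖f z‖ ^ 2) ^ mu = ‖h z‖ ^ 2 * (1 - ‖z‖ ^ 2) ^ lam) :
    ∀ z ∈ ball (0:ℂ) (1/4), ∀ w ∈ ball (0:ℂ) (1/4),
      Complex.exp ((mu:ℂ) * Complex.log (1 - f z * (starRingEnd ℂ) (f ((starRingEnd ℂ) w))))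
        = h z * (starRingEnd ℂ) (h ((starRingEnd ℂ) w)) *
          Complex.exp ((lam:ℂ) * Complex.log (1 - z * w)) := by
  set fc : ℂ → ℂ := fun w => (starRingEnd ℂ) (f ((starRingEnd ℂ) w)) with hfc_def
  set hc : ℂ → ℂ := fun w => (starRingEnd ℂ) (h ((starRingEnd ℂ) w)) with hhc_def
  have hf_norm : ∀ z : ℂ, ‖z‖ < 1 → ‖f z‖ < 1 := fun z hz =>
    mem_ball_zero_iff.mp (hf_maps z (mem_ball_zero_iff.mpr hz))
  have hfc_norm : ∀ w : ℂ, ‖w‖ < 1 → ‖fc w‖ < 1 := by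
    intro w hw
    rw [hfc_def]
    simp only [RCLike.norm_conj]
    exact hf_norm _ (by simpa using hw)
  set Φ : ℂ → ℂ → ℂ := fun z w =>
    Complex.exp ((mu:ℂ) * Complex.log (1 - f z * fc w))
      - h z * hc w * Complex.exp ((lam:ℂ) * Complex.log (1 - z * w)) with hΦ_def
  have hΦdiff : ∀ p : ℂ × ℂ, p.1 ∈ ball (0:ℂ) 1 → p.2 ∈ ball (0:ℂ) 1 →
      DifferentiableAt ℂ (fun q : ℂ × ℂ => Φ q.1 q.2) p := by
    rintro ⟨z, w⟩ hz hw
    have hz' : ‖z‖ < 1 := mem_ball_zero_iff.mp hz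
    have hw' : ‖w‖ < 1 := mem_ball_zero_iff.mp hw
    have hfz : DifferentiableAt ℂ (fun q : ℂ × ℂ => f q.1) (z, w) :=
      (hf_holo.differentiableAt (isOpen_ball.mem_nhds hz)).comp _ differentiableAt_fst
    have hfcw : DifferentiableAt ℂ (fun q : ℂ × ℂ => fc q.2) (z, w) :=
      (diffAt_conj_conj hf_holo hw').comp (g := fc) (f := Prod.snd) _ differentiableAt_snd
    have hnorm1 : ‖f z * fc w‖ < 1 := by
      rw [norm_mul]
      have h1 := hf_norm z hz'
      have h2 := hfc_norm w hw'
      nlinarith [norm_nonneg (f z), norm_nonneg (fc w)]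
    have hs1 : DifferentiableAt ℂ (fun q : ℂ × ℂ => (1:ℂ) - f q.1 * fc q.2) (z, w) :=
      (hfz.mul hfcw).const_sub 1
    have hs2 : DifferentiableAt ℂ
        (fun q : ℂ × ℂ => Complex.log (1 - f q.1 * fc q.2)) (z, w) :=
      hs1.clog (slit_of_norm_lt_one hnorm1)
    have hs3 : DifferentiableAt ℂ
        (fun q : ℂ × ℂ => (mu:ℂ) * Complex.log (1 - f q.1 * fc q.2)) (z, w) :=
      hs2.const_mul _
    have hterm1 : DifferentiableAt ℂ
        (fun q : ℂ × ℂ => Complex.exp ((mu:ℂ) * Complex.log (1 - f q.1 * fc q.2))) (z, w) :=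
      hs3.cexp
    have hhz : DifferentiableAt ℂ (fun q : ℂ × ℂ => h q.1) (z, w) :=
      (hh_holo.differentiableAt (isOpen_ball.mem_nhds hz)).comp _ differentiableAt_fst
    have hhcw : DifferentiableAt ℂ (fun q : ℂ × ℂ => hc q.2) (z, w) :=
      (diffAt_conj_conj hh_holo hw').comp (g := hc) (f := Prod.snd) _ differentiableAt_snd
    have hnorm2 : ‖z * w‖ < 1 := by
      rw [norm_mul]
      nlinarith [norm_nonneg z, norm_nonneg w]
    have ht1 : DifferentiableAt ℂ (fun q : ℂ × ℂ => (1:ℂ) - q.1 * q.2) (z, w) :=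
      (differentiableAt_fst.mul differentiableAt_snd).const_sub 1
    have ht2 : DifferentiableAt ℂ (fun q : ℂ × ℂ => Complex.log (1 - q.1 * q.2)) (z, w) :=
      ht1.clog (slit_of_norm_lt_one hnorm2)
    have ht3 : DifferentiableAt ℂ
        (fun q : ℂ × ℂ => (lam:ℂ) * Complex.log (1 - q.1 * q.2)) (z, w) :=
      ht2.const_mul _
    have hterm2 : DifferentiableAt ℂ
        (fun q : ℂ × ℂ => Complex.exp ((lam:ℂ) * Complex.log (1 - q.1 * q.2))) (z, w) :=
      ht3.cexp
    exact hterm1.sub ((hhz.mul hhcw).mul hterm2)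
  have hΦdiag : ∀ z ∈ ball (0:ℂ) 1, Φ z ((starRingEnd ℂ) z) = 0 := by
    intro z hz
    have hz' : ‖z‖ < 1 := mem_ball_zero_iff.mp hz
    have hfz' : ‖f z‖ < 1 := hf_norm z hz'
    have e1 : fc ((starRingEnd ℂ) z) = (starRingEnd ℂ) (f z) := by
      rw [hfc_def]; simp
    have e2 : hc ((starRingEnd ℂ) z) = (starRingEnd ℂ) (h z) := by
      rw [hhc_def]; simp
    have e3 : (1:ℂ) - f z * (starRingEnd ℂ) (f z) = ((1 - ‖f z‖^2 : ℝ) : ℂ) := by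
      rw [Complex.mul_conj]
      push_cast [Complex.normSq_eq_norm_sq]
      norm_num
    have e4 : (1:ℂ) - z * (starRingEnd ℂ) z = ((1 - ‖z‖^2 : ℝ) : ℂ) := by
      rw [Complex.mul_conj]
      push_cast [Complex.normSq_eq_norm_sq]
      norm_num
    have e5 : h z * (starRingEnd ℂ) (h z) = ((‖h z‖^2 : ℝ) : ℂ) := by
      rw [Complex.mul_conj]
      push_cast [Complex.normSq_eq_norm_sq]
      norm_num
    have hr1 : (0:ℝ) < 1 - ‖f z‖^2 := by nlinarith [norm_nonneg (f z)]
    have hr2 : (0:ℝ) < 1 - ‖z‖^2 := by nlinarith [norm_nonneg z]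
    rw [hΦ_def]
    simp only [e1, e2, e3, e4, e5]
    rw [cexp_ofReal_mul_log hr1, cexp_ofReal_mul_log hr2, sub_eq_zero]
    exact_mod_cast heq z hz
  have hΦ0 := vanish2 hΦdiff hΦdiag
  intro z hz w hw
  have := hΦ0 z hz w hw
  rw [hΦ_def] at this
  rw [sub_eq_zero] at this
  exact this

-- part 2: from the polarized identity, get the linear relation on logs
theorem part2
    (lam mu : ℝ) (hlam : 0 < lam) (hmu : 0 < mu)
    (f : ℂ → ℂ)
    (hf_maps : ∀ z ∈ Metric.ball (0 : ℂ) 1, f z ∈ Metric.ball (0 : ℂ) 1)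
    (hf_holo : DifferentiableOn ℂ f (Metric.ball 0 1))
    (h : ℂ → ℂ)
    (hh_holo : DifferentiableOn ℂ h (Metric.ball 0 1))
    (H1 : ∀ z ∈ ball (0:ℂ) (1/4), ∀ w ∈ ball (0:ℂ) (1/4),
      Complex.exp ((mu:ℂ) * Complex.log (1 - f z * (starRingEnd ℂ) (f ((starRingEnd ℂ) w))))
        = h z * (starRingEnd ℂ) (h ((starRingEnd ℂ) w)) *
          Complex.exp ((lam:ℂ) * Complex.log (1 - z * w))) :
    ∀ z ∈ ball (0:ℂ) (1/4), ∀ w ∈ ball (0:ℂ) (1/4),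
      (mu:ℂ) * (Complex.log (1 - f z * (starRingEnd ℂ) (f ((starRingEnd ℂ) w)))
          + Complex.log (1 - f 0 * (starRingEnd ℂ) (f 0))
          - Complex.log (1 - f z * (starRingEnd ℂ) (f 0))
          - Complex.log (1 - f 0 * (starRingEnd ℂ) (f ((starRingEnd ℂ) w))))
        = (lam:ℂ) * Complex.log (1 - z * w) := by
  set fc : ℂ → ℂ := fun w => (starRingEnd ℂ) (f ((starRingEnd ℂ) w)) with hfc_def
  set hc : ℂ → ℂ := fun w => (starRingEnd ℂ) (h ((starRingEnd ℂ) w)) with hhc_def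
  set L : ℂ → ℂ → ℂ := fun z w => Complex.log (1 - f z * fc w) with hL_def
  have hf_norm : ∀ z : ℂ, ‖z‖ < 1 → ‖f z‖ < 1 := fun z hz =>
    mem_ball_zero_iff.mp (hf_maps z (mem_ball_zero_iff.mpr hz))
  have hfc_norm : ∀ w : ℂ, ‖w‖ < 1 → ‖fc w‖ < 1 := by
    intro w hw
    rw [hfc_def]
    simp only [RCLike.norm_conj]
    exact hf_norm _ (by simpa using hw)
  have hfc0 : fc 0 = (starRingEnd ℂ) (f 0) := by rw [hfc_def]; simp
  have h0mem : (0:ℂ) ∈ ball (0:ℂ) (1/4) := by simp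
  set Xf : ℂ × ℂ → ℂ := fun p =>
    (mu:ℂ) * (L p.1 p.2 + L 0 0 - L p.1 0 - L 0 p.2) - (lam:ℂ) * Complex.log (1 - p.1 * p.2)
    with hXf_def
  set S : Set (ℂ × ℂ) := ball (0:ℂ) (1/4) ×ˢ ball (0:ℂ) (1/4) with hS_def
  have hSmem : ∀ p : ℂ × ℂ, p ∈ S → p.1 ∈ ball (0:ℂ) (1/4) ∧ p.2 ∈ ball (0:ℂ) (1/4) :=
    fun p hp => ⟨hp.1, hp.2⟩
  have hlat : ∀ p ∈ S, ∃ n : ℤ, Xf p = n * (2 * Real.pi * I) := by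
    rintro ⟨z, w⟩ hp
    obtain ⟨hz, hw⟩ := hSmem _ hp
    rw [← Complex.exp_eq_one_iff]
    have hA : Complex.exp ((mu:ℂ) * (L z w + L 0 0))
        = Complex.exp ((mu:ℂ) * L z w) * Complex.exp ((mu:ℂ) * L 0 0) := by
      rw [mul_add, Complex.exp_add]
    have hB : Complex.exp ((mu:ℂ) * (L z 0 + L 0 w) + (lam:ℂ) * Complex.log (1 - z * w))
        = Complex.exp ((mu:ℂ) * L z 0) * Complex.exp ((mu:ℂ) * L 0 w) *
          Complex.exp ((lam:ℂ) * Complex.log (1 - z * w)) := by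
      rw [Complex.exp_add, mul_add, Complex.exp_add]
    have e1 := H1 z hz w hw
    have e2 := H1 0 h0mem 0 h0mem
    have e3 := H1 z hz 0 h0mem
    have e4 := H1 0 h0mem w hw
    have hAB : Complex.exp ((mu:ℂ) * (L z w + L 0 0))
        = Complex.exp ((mu:ℂ) * (L z 0 + L 0 w) + (lam:ℂ) * Complex.log (1 - z * w)) := by
      rw [hA, hB, hL_def]
      simp only []
      rw [e1, e2, e3, e4]
      simp only [mul_zero, zero_mul, sub_zero, Complex.log_one, Complex.exp_zero]
      ring
    have : Xf (z, w) = (mu:ℂ) * (L z w + L 0 0)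
        - ((mu:ℂ) * (L z 0 + L 0 w) + (lam:ℂ) * Complex.log (1 - z * w)) := by
      rw [hXf_def]; ring
    rw [this, Complex.exp_sub, hAB, div_self (Complex.exp_ne_zero _)]
  have hcont : ContinuousOn Xf S := by
    intro p hp
    obtain ⟨hz, hw⟩ := hSmem _ hp
    obtain ⟨z, w⟩ := p
    have hz' : ‖z‖ < 1 := lt_trans (mem_ball_zero_iff.mp hz) (by norm_num)
    have hw' : ‖w‖ < 1 := lt_trans (mem_ball_zero_iff.mp hw) (by norm_num)
    have hzb : z ∈ ball (0:ℂ) 1 := mem_ball_zero_iff.mpr hz'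
    have hnlt : ∀ a c : ℂ, ‖a‖ < 1 → ‖c‖ < 1 → ‖a * c‖ < 1 := by
      intro a c ha hc
      rw [norm_mul]
      nlinarith [norm_nonneg a, norm_nonneg c]
    have h01 : ‖(0:ℂ)‖ < 1 := by simp
    have d1 : DifferentiableAt ℂ (fun q : ℂ × ℂ => L q.1 q.2) (z, w) := by
      rw [hL_def]
      exact ((((hf_holo.differentiableAt (isOpen_ball.mem_nhds hzb)).comp _
          differentiableAt_fst).mul ((diffAt_conj_conj hf_holo hw').comp (g := fc) (f := Prod.snd) _
          differentiableAt_snd)).const_sub 1).clog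
        (slit_of_norm_lt_one (hnlt _ _ (hf_norm z hz') (hfc_norm w hw')))
    have d2 : DifferentiableAt ℂ (fun q : ℂ × ℂ => L q.1 0) (z, w) := by
      rw [hL_def]
      exact ((((hf_holo.differentiableAt (isOpen_ball.mem_nhds hzb)).comp _
          differentiableAt_fst).mul (differentiableAt_const _)).const_sub 1).clog
        (slit_of_norm_lt_one (hnlt _ _ (hf_norm z hz') (hfc_norm 0 h01)))
    have d3 : DifferentiableAt ℂ (fun q : ℂ × ℂ => L 0 q.2) (z, w) := by
      rw [hL_def]
      exact (((differentiableAt_const _).mul ((diffAt_conj_conj hf_holo hw').comp (g := fc) (f := Prod.snd) _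
          differentiableAt_snd)).const_sub 1).clog
        (slit_of_norm_lt_one (hnlt _ _ (hf_norm 0 h01) (hfc_norm w hw')))
    have d4 : DifferentiableAt ℂ (fun q : ℂ × ℂ => Complex.log (1 - q.1 * q.2)) (z, w) := by
      exact ((differentiableAt_fst.mul differentiableAt_snd).const_sub 1).clog
        (slit_of_norm_lt_one (hnlt _ _ hz' hw'))
    have : DifferentiableAt ℂ Xf (z, w) := by
      rw [hXf_def]
      exact ((((d1.add_const _).sub d2).sub d3).const_mul _).sub (d4.const_mul _)
    exact this.continuousAt.continuousWithinAt
  have hX00 : Xf (0, 0) = 0 := by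
    rw [hXf_def]
    simp only [mul_zero, zero_mul, sub_zero, Complex.log_one]
    ring
  have hSconn : IsPreconnected S := by
    rw [hS_def]
    exact ((convex_ball (0:ℂ) (1/4)).prod (convex_ball (0:ℂ) (1/4))).isPreconnected
  have h00S : ((0:ℂ), (0:ℂ)) ∈ S := ⟨h0mem, h0mem⟩
  have hX0 := const_of_lattice hSconn hcont hlat h00S hX00
  intro z hz w hw
  have := hX0 (z, w) ⟨hz, hw⟩
  rw [hXf_def] at this
  simp only [hL_def, hfc_def, map_zero] at this
  linear_combination this

theorem part3
    (lam mu : ℝ) (hlam : 0 < lam) (hmu : 0 < mu)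
    (f : ℂ → ℂ)
    (hf_maps : ∀ z ∈ Metric.ball (0 : ℂ) 1, f z ∈ Metric.ball (0 : ℂ) 1)
    (hf_holo : DifferentiableOn ℂ f (Metric.ball 0 1))
    (H2 : ∀ z ∈ ball (0:ℂ) (1/4), ∀ w ∈ ball (0:ℂ) (1/4),
      (mu:ℂ) * (Complex.log (1 - f z * (starRingEnd ℂ) (f ((starRingEnd ℂ) w)))
          + Complex.log (1 - f 0 * (starRingEnd ℂ) (f 0))
          - Complex.log (1 - f z * (starRingEnd ℂ) (f 0))
          - Complex.log (1 - f 0 * (starRingEnd ℂ) (f ((starRingEnd ℂ) w))))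
        = (lam:ℂ) * Complex.log (1 - z * w)) :
    lam = mu ∧
      ∃ (θ : ℝ) (a : ℂ), ‖a‖ < 1 ∧
        ∀ z ∈ Metric.ball (0 : ℂ) 1,
          f z = Complex.exp (θ * Complex.I) * (z - a) / (1 - (starRingEnd ℂ) a * z) := by
  have hf_norm : ∀ z : ℂ, ‖z‖ < 1 → ‖f z‖ < 1 := fun z hz =>
    mem_ball_zero_iff.mp (hf_maps z (mem_ball_zero_iff.mpr hz))
  set t : ℝ := lam / mu with ht_def
  have htpos : 0 < t := div_pos hlam hmu
  have htC : (t:ℂ) ≠ 0 := by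
    simp only [ne_eq, Complex.ofReal_eq_zero]
    exact htpos.ne'
  have hmuC : (mu:ℂ) ≠ 0 := by
    simp only [ne_eq, Complex.ofReal_eq_zero]
    exact hmu.ne'
  set b : ℂ := f 0 with hb_def
  have hb : ‖b‖ < 1 := hf_norm 0 (by simp)
  set fc : ℂ → ℂ := fun w => (starRingEnd ℂ) (f ((starRingEnd ℂ) w)) with hfc_def
  have hfc_norm : ∀ w : ℂ, ‖w‖ < 1 → ‖fc w‖ < 1 := by
    intro w hw
    rw [hfc_def]
    simp only [RCLike.norm_conj]
    exact hf_norm _ (by simpa using hw)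
  have hfc0 : fc 0 = (starRingEnd ℂ) b := by rw [hfc_def, hb_def]; simp
  have hnlt : ∀ a c : ℂ, ‖a‖ < 1 → ‖c‖ < 1 → ‖a * c‖ < 1 := by
    intro a c ha hc
    rw [norm_mul]
    nlinarith [norm_nonneg a, norm_nonneg c]
  have h0mem : (0:ℂ) ∈ ball (0:ℂ) (1/4) := by simp
  have hmem1 : ∀ z : ℂ, z ∈ ball (0:ℂ) (1/4) → ‖z‖ < 1 := by
    intro z hz
    exact lt_trans (mem_ball_zero_iff.mp hz) (by norm_num)
  set E : ℂ → ℂ := fun u => Complex.exp ((t:ℂ) * Complex.log (1 - u)) with hE_def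
  -- KEY algebraic identity
  have hKEY : ∀ z ∈ ball (0:ℂ) (1/4), ∀ w ∈ ball (0:ℂ) (1/4),
      (1 - f z * fc w) * (1 - b * (starRingEnd ℂ) b)
        = (1 - f z * (starRingEnd ℂ) b) * (1 - b * fc w) * E (z * w) := by
    intro z hz w hw
    have hz' := hmem1 z hz
    have hw' := hmem1 w hw
    have hne1 : 1 - f z * fc w ≠ 0 :=
      one_sub_ne_zero_of_norm_lt_one (hnlt _ _ (hf_norm z hz') (hfc_norm w hw'))
    have hne2 : 1 - b * (starRingEnd ℂ) b ≠ 0 := by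
      rw [← hfc0]
      exact one_sub_ne_zero_of_norm_lt_one
        (hnlt _ _ (hf_norm 0 (by norm_num)) (hfc_norm 0 (by norm_num)))
    have hne3 : 1 - f z * (starRingEnd ℂ) b ≠ 0 := by
      rw [← hfc0]
      exact one_sub_ne_zero_of_norm_lt_one
        (hnlt _ _ (hf_norm z hz') (hfc_norm 0 (by norm_num)))
    have hne4 : 1 - b * fc w ≠ 0 :=
      one_sub_ne_zero_of_norm_lt_one (hnlt _ _ (hf_norm 0 (by norm_num)) (hfc_norm w hw'))
    -- exponentiate H2 / mu
    have hH := H2 z hz w hw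
    have hlogeq : Complex.log (1 - f z * fc w) + Complex.log (1 - b * (starRingEnd ℂ) b)
        = Complex.log (1 - f z * (starRingEnd ℂ) b)
          + Complex.log (1 - b * fc w) + (t:ℂ) * Complex.log (1 - z * w) := by
      have htc : (t:ℂ) = (lam:ℂ) / (mu:ℂ) := by
        rw [ht_def]; push_cast; ring
      rw [htc]
      field_simp
      rw [hfc_def, hb_def] at *
      ring_nf at hH ⊢
      linear_combination hH
    have := congrArg Complex.exp hlogeq
    rw [Complex.exp_add, Complex.exp_add, Complex.exp_add] at this
    rw [Complex.exp_log hne1, Complex.exp_log hne2, Complex.exp_log hne3,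
      Complex.exp_log hne4] at this
    rw [hE_def]
    exact this
  -- Möbius-normalized maps
  set F : ℂ → ℂ := fun z => (f z - b) / (1 - (starRingEnd ℂ) b * f z) with hF_def
  set Fc : ℂ → ℂ := fun w => (fc w - (starRingEnd ℂ) b) / (1 - b * fc w) with hFc_def
  have hden1 : ∀ z : ℂ, ‖z‖ < 1 → 1 - (starRingEnd ℂ) b * f z ≠ 0 := by
    intro z hz
    apply one_sub_ne_zero_of_norm_lt_one
    rw [norm_mul, RCLike.norm_conj]
    have := hf_norm z hz
    nlinarith [norm_nonneg b, norm_nonneg (f z), hb]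
  have hden2 : ∀ w : ℂ, ‖w‖ < 1 → 1 - b * fc w ≠ 0 := by
    intro w hw
    apply one_sub_ne_zero_of_norm_lt_one
    rw [norm_mul]
    have := hfc_norm w hw
    nlinarith [norm_nonneg b, norm_nonneg (fc w), hb]
  have hstar : ∀ z ∈ ball (0:ℂ) (1/4), ∀ w ∈ ball (0:ℂ) (1/4),
      1 - F z * Fc w = E (z * w) := by
    intro z hz w hw
    have hz' := hmem1 z hz
    have hw' := hmem1 w hw
    have hd1 := hden1 z hz'
    have hd2 := hden2 w hw'
    have hK := hKEY z hz w hw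
    rw [hF_def, hFc_def]
    simp only []
    rw [div_mul_div_comm, sub_div' (mul_ne_zero hd1 hd2), div_eq_iff (mul_ne_zero hd1 hd2)]
    ring_nf
    ring_nf at hK
    linear_combination hK
  -- derivative of F at 0
  have hf_diff0 : DifferentiableAt ℂ f 0 :=
    hf_holo.differentiableAt (isOpen_ball.mem_nhds (by simp))
  have hFdiff : DifferentiableAt ℂ F 0 := by
    rw [hF_def]
    apply DifferentiableAt.div
    · exact hf_diff0.sub_const b
    · exact (hf_diff0.const_mul _).const_sub 1
    · exact hden1 0 (by norm_num)
  set c0 : ℂ := deriv F 0 with hc0_def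
  have hF0 : HasDerivAt F c0 0 := hFdiff.hasDerivAt
  -- the key derivative identity
  have hdagger : ∀ w ∈ ball (0:ℂ) (1/4), c0 * Fc w = (t:ℂ) * w := by
    intro w hw
    have hw' := hmem1 w hw
    have hev : (fun z => 1 - F z * Fc w) =ᶠ[nhds (0:ℂ)] (fun z => E (z * w)) := by
      apply Filter.eventuallyEq_of_mem (isOpen_ball.mem_nhds h0mem)
      intro z hz
      exact hstar z hz w hw
    have hD1 : HasDerivAt (fun z => 1 - F z * Fc w) (-(c0 * Fc w)) 0 :=
      (hF0.mul_const (Fc w)).const_sub 1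
    have hslit : (1:ℂ) - 0 * w ∈ Complex.slitPlane := by
      rw [zero_mul]
      exact slit_of_norm_lt_one (by simp)
    have hinner : HasDerivAt (fun z : ℂ => 1 - z * w) (-w) 0 := by
      have := ((hasDerivAt_id (0:ℂ)).mul_const w).const_sub 1
      simpa using this
    have hlog : HasDerivAt (fun z : ℂ => Complex.log (1 - z * w))
        (((1:ℂ) - 0 * w)⁻¹ * (-w)) 0 := by
      exact (Complex.hasDerivAt_log hslit).comp 0 hinner
    have hmul : HasDerivAt (fun z : ℂ => (t:ℂ) * Complex.log (1 - z * w))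
        ((t:ℂ) * (((1:ℂ) - 0 * w)⁻¹ * (-w))) 0 := hlog.const_mul _
    have hD2 : HasDerivAt (fun z => E (z * w))
        (Complex.exp ((t:ℂ) * Complex.log (1 - (0:ℂ) * w)) *
          ((t:ℂ) * (((1:ℂ) - 0 * w)⁻¹ * (-w)))) 0 := by
      rw [hE_def]
      exact hmul.cexp
    have hde := hev.deriv_eq
    rw [hD1.deriv, hD2.deriv] at hde
    simp only [zero_mul, sub_zero, Complex.log_one, mul_zero, Complex.exp_zero,
      inv_one, one_mul] at hde
    linear_combination -hde
  -- w₀ trick: c0 ≠ 0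
  set w0 : ℂ := 1/8 with hw0_def
  have hw0mem : w0 ∈ ball (0:ℂ) (1/4) := by
    rw [mem_ball_zero_iff, hw0_def, norm_div, norm_one, Complex.norm_ofNat]
    norm_num
  have hw0ne : w0 ≠ 0 := by
    rw [hw0_def]
    norm_num
  have hcw0 : (starRingEnd ℂ) w0 = w0 := by
    rw [hw0_def, map_div₀, map_one, map_ofNat]
  have hc0ne : c0 ≠ 0 := by
    intro hc0
    have := hdagger w0 hw0mem
    rw [hc0, zero_mul] at this
    exact (mul_ne_zero htC hw0ne) this.symm
  -- conj symmetry of Fc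
  have hFc_conj : ∀ w : ℂ, Fc ((starRingEnd ℂ) w) = (starRingEnd ℂ) (F w) := by
    intro w
    rw [hFc_def, hF_def, hfc_def]
    simp [map_div₀, map_sub, map_mul, Complex.conj_conj]
  -- linearity of F
  have hFlin : ∀ z ∈ ball (0:ℂ) (1/4), (starRingEnd ℂ) c0 * F z = (t:ℂ) * z := by
    intro z hz
    have hzc : (starRingEnd ℂ) z ∈ ball (0:ℂ) (1/4) := by
      rw [mem_ball_zero_iff]
      rw [mem_ball_zero_iff] at hz
      simpa using hz
    have := hdagger ((starRingEnd ℂ) z) hzc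
    rw [hFc_conj z] at this
    have := congrArg (starRingEnd ℂ) this
    simpa [map_mul, Complex.conj_conj, Complex.conj_ofReal] using this
  set c : ℂ := (t:ℂ) / (starRingEnd ℂ) c0 with hc_def
  have hc0cne : (starRingEnd ℂ) c0 ≠ 0 := by
    simpa using hc0ne
  have hFcz : ∀ z ∈ ball (0:ℂ) (1/4), F z = c * z := by
    intro z hz
    have := hFlin z hz
    rw [hc_def]
    field_simp
    linear_combination this
  -- c0 = c
  have hc0c : c0 = c := by
    have hev : F =ᶠ[nhds (0:ℂ)] (fun z => c * z) := by
      apply Filter.eventuallyEq_of_mem (isOpen_ball.mem_nhds h0mem)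
      intro z hz
      exact hFcz z hz
    have h1 := hev.deriv_eq
    rw [← hc0_def] at h1
    have h2 : deriv (fun z : ℂ => c * z) 0 = c := by
      have h7 : HasDerivAt (fun z : ℂ => c * z) (c * 1) 0 := (hasDerivAt_id (0:ℂ)).const_mul c
      simpa using h7.deriv
    rw [h1, h2]
  have hcc : (starRingEnd ℂ) c * c = (t:ℂ) := by
    have h3 := hFlin w0 hw0mem
    rw [hFcz w0 hw0mem, hc0c] at h3
    have h4 : ((starRingEnd ℂ) c * c - (t:ℂ)) * w0 = 0 := by linear_combination h3
    rcases mul_eq_zero.mp h4 with h5 | h5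
    · linear_combination h5
    · exact absurd h5 hw0ne
  -- E is linear near 0
  have hElin : ∀ u : ℂ, ‖u‖ < 1/32 → E u = 1 - (t:ℂ) * u := by
    intro u hu
    set z : ℂ := u * 8 with hz_def
    have hzmem : z ∈ ball (0:ℂ) (1/4) := by
      rw [mem_ball_zero_iff, hz_def, norm_mul]
      simp only [Complex.norm_ofNat]
      linarith
    have hzw : z * w0 = u := by
      rw [hz_def, hw0_def]
      ring
    have h1 := hstar z hzmem w0 hw0mem
    rw [hzw, hFcz z hzmem] at h1
    have h2 : Fc w0 = (starRingEnd ℂ) c * w0 := by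
      have h6 := hFc_conj w0
      rw [hcw0] at h6
      rw [h6, hFcz w0 hw0mem, map_mul, hcw0]
    rw [h2] at h1
    rw [← h1, ← hzw]
    linear_combination (-(z * w0)) * hcc
  -- t = 1
  have h1u0 : (1:ℂ) - 1/64 ≠ 0 := by norm_num
  set u0 : ℂ := 1/64 with hu0_def
  have hu0norm : ‖u0‖ < 1/32 := by
    rw [hu0_def, norm_div, norm_one, Complex.norm_ofNat]
    norm_num
  have hu0ne : u0 ≠ 0 := by rw [hu0_def]; norm_num
  have hu0mem : u0 ∈ ball (0:ℂ) (1/32) := mem_ball_zero_iff.mpr hu0norm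
  have hu0norm1 : ‖u0‖ < 1 := lt_trans hu0norm (by norm_num)
  have hev2 : E =ᶠ[nhds u0] (fun u => 1 - (t:ℂ) * u) := by
    apply Filter.eventuallyEq_of_mem (isOpen_ball.mem_nhds hu0mem)
    intro u hu
    exact hElin u (mem_ball_zero_iff.mp hu)
  have hinner2 : HasDerivAt (fun u : ℂ => 1 - u) (-1 : ℂ) u0 := by
    simpa using (hasDerivAt_id u0).const_sub 1
  have hlog2 : HasDerivAt (fun u : ℂ => Complex.log (1 - u)) ((1 - u0)⁻¹ * (-1)) u0 :=
    (Complex.hasDerivAt_log (slit_of_norm_lt_one hu0norm1)).comp u0 hinner2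
  have hD1 : HasDerivAt E
      (Complex.exp ((t:ℂ) * Complex.log (1 - u0)) * ((t:ℂ) * ((1 - u0)⁻¹ * (-1)))) u0 := by
    rw [hE_def]
    exact (hlog2.const_mul _).cexp
  have hD2 : HasDerivAt (fun u : ℂ => 1 - (t:ℂ) * u) (-(t:ℂ)) u0 := by
    simpa using ((hasDerivAt_id u0).const_mul (t:ℂ)).const_sub 1
  have hde2 := hev2.deriv_eq
  rw [hD1.deriv, hD2.deriv] at hde2
  have hEu0 : Complex.exp ((t:ℂ) * Complex.log (1 - u0)) = 1 - (t:ℂ) * u0 := by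
    have := hElin u0 hu0norm
    rw [hE_def] at this
    exact this
  rw [hEu0] at hde2
  have h1u0' : (1:ℂ) - u0 ≠ 0 := by rw [hu0_def]; norm_num
  have hinv : ((1:ℂ) - u0)⁻¹ = 64/63 := by rw [hu0_def]; norm_num
  have h9 : ((1:ℂ) - (t:ℂ)) * ((t:ℂ) * u0) = 0 := by
    rw [hinv] at hde2
    rw [hu0_def] at hde2 ⊢
    linear_combination (-(63:ℂ)/64) * hde2
  have htC1 : (t:ℂ) = 1 := by
    rcases mul_eq_zero.mp h9 with h5 | h5
    · linear_combination -h5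
    · exact absurd h5 (mul_ne_zero htC hu0ne)
  have ht1 : t = 1 := by exact_mod_cast htC1
  have hlammu : lam = mu := by
    rw [ht_def] at ht1
    field_simp at ht1
    exact ht1
  -- |c| = 1
  have hcc1 : (starRingEnd ℂ) c * c = 1 := by rw [hcc, htC1]
  have hnormc : ‖c‖ = 1 := by
    have h10 : c * (starRingEnd ℂ) c = 1 := by linear_combination hcc1
    rw [Complex.mul_conj] at h10
    have h11 : Complex.normSq c = 1 := by exact_mod_cast h10
    have h12 : ‖c‖^2 = 1 := by
      rw [← Complex.normSq_eq_norm_sq, h11]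
    have h13 : (‖c‖ - 1) * (‖c‖ + 1) = 0 := by linear_combination h12
    rcases mul_eq_zero.mp h13 with h5 | h5
    · linarith
    · nlinarith [norm_nonneg c]
  have hcne : c ≠ 0 := by
    intro hh
    rw [hh] at hnormc
    simp at hnormc
  have hcc2 : c * (starRingEnd ℂ) c = 1 := by linear_combination hcc1
  have hconjc : (starRingEnd ℂ) c = c⁻¹ := eq_inv_of_mul_eq_one_right (by linear_combination hcc1)
  set θ : ℝ := Complex.arg c with hθ_def
  have hexpθ : Complex.exp ((θ:ℂ) * Complex.I) = c := by
    have := Complex.norm_mul_exp_arg_mul_I c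
    rw [show ‖c‖ = 1 from hnormc] at this
    rw [hθ_def]
    simpa using this
  set a : ℂ := -(b / c) with ha_def
  have ha : ‖a‖ < 1 := by
    rw [ha_def, norm_neg, norm_div, hnormc, div_one]
    exact hb
  have hca : c * a = -b := by
    rw [ha_def]
    field_simp
  have hcja : (starRingEnd ℂ) a = -((starRingEnd ℂ) b * c) := by
    rw [ha_def]
    rw [map_neg, map_div₀, hconjc, div_eq_mul_inv, inv_inv]
  have hsmall : ∀ z ∈ ball (0:ℂ) (1/4),
      f z = Complex.exp ((θ:ℂ) * Complex.I) * (z - a) / (1 - (starRingEnd ℂ) a * z) := by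
    intro z hz
    have hz' := hmem1 z hz
    have hd1 := hden1 z hz'
    have hFz := hFcz z hz
    rw [hF_def] at hFz
    simp only [] at hFz
    rw [div_eq_iff hd1] at hFz
    have hdenA : 1 - (starRingEnd ℂ) a * z ≠ 0 := by
      apply one_sub_ne_zero_of_norm_lt_one
      rw [norm_mul, RCLike.norm_conj]
      nlinarith [norm_nonneg a, norm_nonneg z, ha, hz']
    rw [hexpθ, eq_div_iff hdenA, hcja]
    linear_combination hFz + hca
  -- extend to the whole disk by the identity theorem
  have hTdiff : DifferentiableOn ℂ
      (fun z => Complex.exp ((θ:ℂ) * Complex.I) * (z - a) / (1 - (starRingEnd ℂ) a * z))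
      (ball (0:ℂ) 1) := by
    apply DifferentiableOn.div
    · exact ((differentiable_id.sub_const a).const_mul _).differentiableOn
    · exact ((differentiable_id.const_mul _).const_sub 1).differentiableOn
    · intro z hz
      apply one_sub_ne_zero_of_norm_lt_one
      rw [norm_mul, RCLike.norm_conj]
      have hz' := mem_ball_zero_iff.mp hz
      nlinarith [norm_nonneg a, norm_nonneg z, ha]
  have hEqOn := (hf_holo.analyticOnNhd isOpen_ball).eqOn_of_preconnected_of_eventuallyEq
    (hTdiff.analyticOnNhd isOpen_ball) (convex_ball (0:ℂ) 1).isPreconnected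
    (by simp : (0:ℂ) ∈ ball (0:ℂ) 1)
    (Filter.eventuallyEq_of_mem (isOpen_ball.mem_nhds h0mem) hsmall)
  exact ⟨hlammu, θ, a, ha, fun z hz => hEqOn hz⟩


theorem holomorphic_isometry_disk_is_automorphism
    (lam mu : ℝ) (hlam : 0 < lam) (hmu : 0 < mu)
    (f : ℂ → ℂ)
    (hf_maps : ∀ z ∈ Metric.ball (0 : ℂ) 1, f z ∈ Metric.ball (0 : ℂ) 1)
    (hf_holo : DifferentiableOn ℂ f (Metric.ball 0 1))
    (h : ℂ → ℂ)
    (hh_holo : DifferentiableOn ℂ h (Metric.ball 0 1))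
    (hh_ne : ∀ z ∈ Metric.ball (0 : ℂ) 1, h z ≠ 0)
    (heq : ∀ z ∈ Metric.ball (0 : ℂ) 1,
      (1 - ‖f z‖ ^ 2) ^ mu = ‖h z‖ ^ 2 * (1 - ‖z‖ ^ 2) ^ lam) :
    lam = mu ∧
      ∃ (θ : ℝ) (a : ℂ), ‖a‖ < 1 ∧
        ∀ z ∈ Metric.ball (0 : ℂ) 1,
          f z = Complex.exp (θ * Complex.I) * (z - a) / (1 - (starRingEnd ℂ) a * z) := by
  exact part3 lam mu hlam hmu f hf_maps hf_holo
    (part2 lam mu hlam hmu f hf_maps hf_holo h hh_holo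
      (part1 lam mu hlam hmu f hf_maps hf_holo h hh_holo hh_ne heq))
end
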